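/- arXiv:1905.07678 — 9 statements merged into one kernel-verified Lean document; each statement's English description precedes it below -/
import Mathlib

section
/- Let a, b, a', b' be nonnegative reals and z, z' complex numbers with |z| ≤ √(a b) and |z'| ≤ √(a' b'). If |z + z'| = √((a+a')(b+b')), then there exists λ ≥ 0 such that (a', b', z') = λ·(a, b, z) or (a, b, z) = λ·(a', b', z'). -/
theorem cauchy_schwarz_rigidity (a b a' b' : ℝ) (z z' : ℂ)
    (ha : 0 ≤ a) (hb : 0 ≤ b) (ha' : 0 ≤ a') (hb' : 0 ≤ b')
    (hz : ‖z‖ ≤ Real.sqrt (a * b))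
    (hz' : ‖z'‖ ≤ Real.sqrt (a' * b'))
    (heq : ‖z + z'‖ = Real.sqrt ((a + a') * (b + b'))) :
    ∃ l : ℝ, 0 ≤ l ∧
      ((a' = l * a ∧ b' = l * b ∧ z' = (l : ℂ) * z) ∨
       (a = l * a' ∧ b = l * b' ∧ z = (l : ℂ) * z')) := by
  set sa := Real.sqrt a with hsa
  set sb := Real.sqrt b with hsb
  set sa' := Real.sqrt a' with hsa'
  set sb' := Real.sqrt b' with hsb'
  have hsa2 : sa ^ 2 = a := Real.sq_sqrt ha
  have hsb2 : sb ^ 2 = b := Real.sq_sqrt hb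
  have hsa'2 : sa' ^ 2 = a' := Real.sq_sqrt ha'
  have hsb'2 : sb' ^ 2 = b' := Real.sq_sqrt hb'
  have hsa0 : 0 ≤ sa := Real.sqrt_nonneg a
  have hsb0 : 0 ≤ sb := Real.sqrt_nonneg b
  have hsa'0 : 0 ≤ sa' := Real.sqrt_nonneg a'
  have hsb'0 : 0 ≤ sb' := Real.sqrt_nonneg b'
  have hmul : Real.sqrt (a * b) = sa * sb := Real.sqrt_mul ha b
  have hmul' : Real.sqrt (a' * b') = sa' * sb' := Real.sqrt_mul ha' b'
  set S := Real.sqrt (a + a') with hS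
  set T := Real.sqrt (b + b') with hT
  have hS2 : S ^ 2 = a + a' := Real.sq_sqrt (by linarith)
  have hT2 : T ^ 2 = b + b' := Real.sq_sqrt (by linarith)
  have hS0 : 0 ≤ S := Real.sqrt_nonneg _
  have hT0 : 0 ≤ T := Real.sqrt_nonneg _
  have hmulST : Real.sqrt ((a + a') * (b + b')) = S * T :=
    Real.sqrt_mul (by linarith) _
  have e1 : a * b = sa ^ 2 * sb ^ 2 := by rw [hsa2, hsb2]
  have e2 : a * b' = sa ^ 2 * sb' ^ 2 := by rw [hsa2, hsb'2]
  have e3 : a' * b = sa' ^ 2 * sb ^ 2 := by rw [hsa'2, hsb2]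
  have e4 : a' * b' = sa' ^ 2 * sb' ^ 2 := by rw [hsa'2, hsb'2]
  -- step 3 : sqrt(ab) + sqrt(a'b') ≤ sqrt((a+a')(b+b'))
  have h3 : sa * sb + sa' * sb' ≤ S * T := by
    have hnn : 0 ≤ sa * sb + sa' * sb' := by positivity
    have hsq : (sa * sb + sa' * sb') ^ 2 ≤ (S * T) ^ 2 := by
      have key : (S * T) ^ 2 - (sa * sb + sa' * sb') ^ 2 = (sa * sb' - sa' * sb) ^ 2 := by
        rw [mul_pow, hS2, hT2]
        linear_combination e1 + e2 + e3 + e4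
      linarith [key, sq_nonneg (sa * sb' - sa' * sb)]
    calc sa * sb + sa' * sb' = Real.sqrt ((sa * sb + sa' * sb') ^ 2) :=
          (Real.sqrt_sq hnn).symm
    _ ≤ Real.sqrt ((S * T) ^ 2) := Real.sqrt_le_sqrt hsq
    _ = S * T := Real.sqrt_sq (mul_nonneg hS0 hT0)
  -- derive equalities in the chain
  have habsz : ‖z‖ = sa * sb := by
    have := norm_add_le z z'
    rw [heq, hmulST] at this
    rw [hmul] at hz; rw [hmul'] at hz'
    linarith
  have habsz' : ‖z'‖ = sa' * sb' := by
    have := norm_add_le z z'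
    rw [heq, hmulST] at this
    rw [hmul] at hz; rw [hmul'] at hz'
    linarith
  have htri : ‖z + z'‖ = ‖z‖ + ‖z'‖ := by
    have := norm_add_le z z'
    rw [heq, hmulST, habsz, habsz'] at this ⊢
    linarith
  have hE : sa * sb + sa' * sb' = S * T := by
    rw [← habsz, ← habsz', ← htri, heq, hmulST]
  -- cross condition
  have hsqE : (sa * sb + sa' * sb') ^ 2 = (a + a') * (b + b') := by
    rw [hE, mul_pow, hS2, hT2]
  have hcross0 : (sa * sb' - sa' * sb) ^ 2 = 0 := by
    linear_combination -e1 - e2 - e3 - e4 - hsqE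
  have hcross1 : sa * sb' = sa' * sb := by
    have := pow_eq_zero_iff (n := 2) (by norm_num) |>.mp hcross0
    linarith
  have hcross : a * b' = a' * b := by
    calc a * b' = (sa * sb') ^ 2 := by rw [mul_pow, hsa2, hsb'2]
    _ = (sa' * sb) ^ 2 := by rw [hcross1]
    _ = a' * b := by rw [mul_pow, hsa'2, hsb2]
  -- same ray
  have hray : SameRay ℝ z z' := by
    rw [sameRay_iff_norm_add]
    simpa using htri
  by_cases h0 : a = 0 ∧ b = 0
  · obtain ⟨rfl, rfl⟩ := h0
    have hz0 : z = 0 := by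
      have : ‖z‖ ≤ 0 := by simpa using hz
      exact norm_eq_zero.mp (le_antisymm this (norm_nonneg z))
    exact ⟨0, le_refl _, Or.inr ⟨by ring, by ring, by simp [hz0]⟩⟩
  rcases lt_or_eq_of_le ha with hapos | haz
  · -- a > 0
    refine ⟨a' / a, div_nonneg ha' ha, Or.inl ⟨by field_simp, ?_, ?_⟩⟩
    · field_simp
      linarith [hcross]
    · have hzabs' : ‖z'‖ = (a' / a) * ‖z‖ := by
        rw [habsz, habsz']
        have h1 : a * (sa' * sb') = a' * (sa * sb) → sa' * sb' = a' / a * (sa * sb) := by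
          intro h; field_simp; linarith
        apply h1
        calc a * (sa' * sb') = (sa * sa') * (sa * sb') := by rw [← hsa2]; ring
        _ = (sa * sa') * (sa' * sb) := by rw [hcross1]
        _ = a' * (sa * sb) := by rw [← hsa'2]; ring
      by_cases hz0 : z = 0
      · have h5 : ‖z'‖ = 0 := by rw [hzabs', hz0]; simp
        have h6 : z' = 0 := norm_eq_zero.mp h5
        simp [h6, hz0]
      · obtain ⟨r, hr0, hrz⟩ := hray.exists_nonneg_left hz0
        have h7 : ‖z'‖ = r * ‖z‖ := by
          rw [← hrz, norm_smul, Real.norm_eq_abs, abs_of_nonneg hr0]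
        have hzne : ‖z‖ ≠ 0 := fun h => hz0 (norm_eq_zero.mp h)
        have hrl : r = a' / a := by
          have h8 := hzabs'.symm.trans h7
          exact mul_right_cancel₀ hzne (by linarith)
        rw [← hrz, Complex.real_smul, hrl]
  · -- a = 0, so b > 0
    have hbpos : 0 < b := by
      rcases lt_or_eq_of_le hb with h | h
      · exact h
      · exact absurd ⟨haz.symm, h.symm⟩ h0
    have ha'0 : a' = 0 := by
      have h9 : a' * b = 0 := by rw [← hcross, ← haz]; ring
      rcases mul_eq_zero.mp h9 with h | h
      · exact h
      · exact absurd h (ne_of_gt hbpos)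
    have hz0 : z = 0 := by
      have : ‖z‖ = 0 := by rw [habsz, hsa, ← haz, Real.sqrt_zero, zero_mul]
      exact norm_eq_zero.mp this
    have hz'0 : z' = 0 := by
      have : ‖z'‖ = 0 := by rw [habsz', hsa', ha'0, Real.sqrt_zero, zero_mul]
      exact norm_eq_zero.mp this
    refine ⟨b' / b, div_nonneg hb' hb, Or.inl ⟨by rw [ha'0, ← haz]; ring, by field_simp, ?_⟩⟩
    simp [hz0, hz'0]
end

section
/- Let s, t ∈ ℝ⁴ with nonnegative entries and u ∈ ℂ⁴. Suppose √(s₁t₁) + √(s₄t₄) ≥ |u₁| + |u₄| and √(s₂t₂) + √(s₃t₃) ≥ |u₂| + |u₃|. Let a, b ∈ ℝ⁴ with nonnegative entries and z ∈ ℂ⁴ satisfy min{√(a₁b₁), √(a₄b₄)} ≥ max{|z₁|, |z₄|} and min{√(a₂b₂), √(a₃b₃)} ≥ max{|z₂|, |z₃|}. Then Σᵢ (sᵢaᵢ + tᵢbᵢ + 2 Re(uᵢzᵢ)) ≥ 0. -/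
lemma amgm_sqrt (s t a b : ℝ) (hs : 0 ≤ s) (ht : 0 ≤ t) (ha : 0 ≤ a) (hb : 0 ≤ b) :
    2 * (Real.sqrt (s * t) * Real.sqrt (a * b)) ≤ s * a + t * b := by
  have h1 : Real.sqrt (s * t) * Real.sqrt (a * b)
      = Real.sqrt (s * a) * Real.sqrt (t * b) := by
    rw [← Real.sqrt_mul (mul_nonneg hs ht), ← Real.sqrt_mul (mul_nonneg hs ha)]
    ring_nf
  rw [h1]
  nlinarith [Real.sq_sqrt (mul_nonneg hs ha), Real.sq_sqrt (mul_nonneg ht hb),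
    sq_nonneg (Real.sqrt (s * a) - Real.sqrt (t * b))]

lemma pair_bound (p q c d α β x y : ℝ) (hp : 0 ≤ p) (hq : 0 ≤ q)
    (hα : 0 ≤ α) (hβ : 0 ≤ β) (hx : 0 ≤ x) (hy : 0 ≤ y)
    (h1 : α + β ≤ p + q) (h2 : max x y ≤ min c d) :
    α * x + β * y ≤ p * c + q * d := by
  have hM0 : 0 ≤ max x y := le_trans hx (le_max_left _ _)
  have hc : max x y ≤ c := le_trans h2 (min_le_left _ _)
  have hd : max x y ≤ d := le_trans h2 (min_le_right _ _)
  nlinarith [le_max_left x y, le_max_right x y, mul_le_mul_of_nonneg_left hc hp,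
    mul_le_mul_of_nonneg_left hd hq, mul_le_mul_of_nonneg_right h1 hM0,
    mul_le_mul_of_nonneg_left (le_max_left x y) hα,
    mul_le_mul_of_nonneg_left (le_max_right x y) hβ]

theorem pairing_nonneg_A (s t a b : Fin 4 → ℝ) (u z : Fin 4 → ℂ)
    (hs : ∀ i, 0 ≤ s i) (ht : ∀ i, 0 ≤ t i)
    (ha : ∀ i, 0 ≤ a i) (hb : ∀ i, 0 ≤ b i)
    (hW14 : Real.sqrt (s 0 * t 0) + Real.sqrt (s 3 * t 3) ≥
      ‖u 0‖ + ‖u 3‖)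
    (hW23 : Real.sqrt (s 1 * t 1) + Real.sqrt (s 2 * t 2) ≥
      ‖u 1‖ + ‖u 2‖)
    (hS14 : min (Real.sqrt (a 0 * b 0)) (Real.sqrt (a 3 * b 3)) ≥
      max (‖z 0‖) (‖z 3‖))
    (hS23 : min (Real.sqrt (a 1 * b 1)) (Real.sqrt (a 2 * b 2)) ≥
      max (‖z 1‖) (‖z 2‖)) :
    0 ≤ ∑ i, (s i * a i + t i * b i + 2 * (u i * z i).re) := by
  have hre : ∀ i : Fin 4, -(‖u i‖ * ‖z i‖) ≤ (u i * z i).re := by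
    intro i
    have h := (abs_le.1 (Complex.abs_re_le_norm (u i * z i))).1
    rwa [norm_mul] at h
  have hAM : ∀ i : Fin 4, 2 * (Real.sqrt (s i * t i) * Real.sqrt (a i * b i))
      ≤ s i * a i + t i * b i := fun i => amgm_sqrt _ _ _ _ (hs i) (ht i) (ha i) (hb i)
  have hp : ∀ i : Fin 4, 0 ≤ Real.sqrt (s i * t i) := fun i => Real.sqrt_nonneg _
  have h14 : ‖u 0‖ * ‖z 0‖ + ‖u 3‖ * ‖z 3‖
      ≤ Real.sqrt (s 0 * t 0) * Real.sqrt (a 0 * b 0)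
        + Real.sqrt (s 3 * t 3) * Real.sqrt (a 3 * b 3) :=
    pair_bound _ _ _ _ _ _ _ _ (hp 0) (hp 3) (norm_nonneg _)
      (norm_nonneg _) (norm_nonneg _) (norm_nonneg _)
      hW14 hS14
  have h23 : ‖u 1‖ * ‖z 1‖ + ‖u 2‖ * ‖z 2‖
      ≤ Real.sqrt (s 1 * t 1) * Real.sqrt (a 1 * b 1)
        + Real.sqrt (s 2 * t 2) * Real.sqrt (a 2 * b 2) :=
    pair_bound _ _ _ _ _ _ _ _ (hp 1) (hp 2) (norm_nonneg _)
      (norm_nonneg _) (norm_nonneg _) (norm_nonneg _)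
      hW23 hS23
  rw [Fin.sum_univ_four]
  linarith [hre 0, hre 1, hre 2, hre 3, hAM 0, hAM 1, hAM 2, hAM 3]
end

section
/- Let s, t ∈ ℝ⁴ be nonnegative and u ∈ ℂ⁴ satisfy Σᵢ √(sᵢtᵢ) ≥ Σᵢ |uᵢ|. Let a, b ∈ ℝ⁴ be nonnegative and z ∈ ℂ⁴ satisfy min{√(aᵢbᵢ), √(aⱼbⱼ)} ≥ max{|zᵢ|, |zⱼ|} for all i ≠ j in {1,2,3,4}. Then Σᵢ (sᵢaᵢ + tᵢbᵢ + 2 Re(uᵢ zᵢ)) ≥ 0. -/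
theorem pairing_nonneg_W3 (s t a b : Fin 4 → ℝ) (u z : Fin 4 → ℂ)
    (hs : ∀ i, 0 ≤ s i) (ht : ∀ i, 0 ≤ t i)
    (ha : ∀ i, 0 ≤ a i) (hb : ∀ i, 0 ≤ b i)
    (hW3 : ∑ i, Real.sqrt (s i * t i) ≥ ∑ i, ‖u i‖)
    (hS1 : ∀ i j : Fin 4, i ≠ j →
      min (Real.sqrt (a i * b i)) (Real.sqrt (a j * b j)) ≥
        max ‖z i‖ ‖z j‖) :
    0 ≤ ∑ i, (s i * a i + t i * b i + 2 * (u i * z i).re) := by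
  have key : ∀ i j : Fin 4, ‖z i‖ ≤ Real.sqrt (a j * b j) := by
    intro i j
    by_cases h : i = j
    · subst h
      set k : Fin 4 := if i = 0 then 1 else 0 with hk
      have hne : i ≠ k := by
        rw [hk]; split_ifs with h0
        · subst h0; decide
        · exact h0
      have := hS1 i k hne
      exact le_trans (le_trans (le_max_left _ _) this) (min_le_left _ _)
    · have := hS1 i j h
      exact le_trans (le_trans (le_max_left _ _) this) (min_le_right _ _)
  set M : ℝ := min (min (Real.sqrt (a 0 * b 0)) (Real.sqrt (a 1 * b 1)))
      (min (Real.sqrt (a 2 * b 2)) (Real.sqrt (a 3 * b 3))) with hM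
  have hMle : ∀ i, M ≤ Real.sqrt (a i * b i) := by
    intro i
    fin_cases i
    · exact le_trans (min_le_left _ _) (min_le_left _ _)
    · exact le_trans (min_le_left _ _) (min_le_right _ _)
    · exact le_trans (min_le_right _ _) (min_le_left _ _)
    · exact le_trans (min_le_right _ _) (min_le_right _ _)
  have hzM : ∀ i, ‖z i‖ ≤ M := by
    intro i
    exact le_min (le_min (key i 0) (key i 1)) (le_min (key i 2) (key i 3))
  have hM0 : 0 ≤ M := le_trans (norm_nonneg _) (hzM 0)
  have pt : ∀ i : Fin 4,
      2 * M * Real.sqrt (s i * t i) - 2 * M * ‖u i‖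
        ≤ s i * a i + t i * b i + 2 * (u i * z i).re := by
    intro i
    have e : Real.sqrt (s i * t i) * Real.sqrt (a i * b i)
        = Real.sqrt (s i * a i) * Real.sqrt (t i * b i) := by
      rw [← Real.sqrt_mul (mul_nonneg (hs i) (ht i)),
        ← Real.sqrt_mul (mul_nonneg (hs i) (ha i))]
      ring_nf
    have h1 : 2 * Real.sqrt (s i * t i) * Real.sqrt (a i * b i)
        ≤ s i * a i + t i * b i := by
      nlinarith [sq_nonneg (Real.sqrt (s i * a i) - Real.sqrt (t i * b i)),
        Real.sq_sqrt (mul_nonneg (hs i) (ha i)),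
        Real.sq_sqrt (mul_nonneg (ht i) (hb i))]
    have h2 : 2 * M * Real.sqrt (s i * t i)
        ≤ 2 * Real.sqrt (s i * t i) * Real.sqrt (a i * b i) := by
      have := Real.sqrt_nonneg (s i * t i)
      nlinarith [hMle i]
    have h3 : -(‖u i‖ * M) ≤ (u i * z i).re := by
      have h4 : -‖u i * z i‖ ≤ (u i * z i).re :=
        neg_le_of_abs_le (Complex.abs_re_le_norm _)
      rw [norm_mul] at h4
      have := mul_le_mul_of_nonneg_left (hzM i) (norm_nonneg (u i))
      linarith
    linarith
  have hsum : ∑ i, (2 * M * Real.sqrt (s i * t i) - 2 * M * ‖u i‖)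
      ≤ ∑ i, (s i * a i + t i * b i + 2 * (u i * z i).re) :=
    Finset.sum_le_sum fun i _ => pt i
  have hrw : ∑ i, (2 * M * Real.sqrt (s i * t i) - 2 * M * ‖u i‖)
      = 2 * M * ((∑ i, Real.sqrt (s i * t i)) - ∑ i, ‖u i‖) := by
    rw [Finset.sum_sub_distrib, ← Finset.mul_sum, ← Finset.mul_sum, mul_sub]
  have : 0 ≤ 2 * M * ((∑ i, Real.sqrt (s i * t i)) - ∑ i, ‖u i‖) :=
    mul_nonneg (by linarith) (by linarith [hW3])
  linarith
end

section
/- Let a, b ∈ ℝ⁴ be nonnegative with a₄ = b₄ = 0, and z ∈ ℂ⁴ with z₄ = 0, satisfying √(a₁b₁) = √(a₂b₂) = √(a₃b₃) = |z₁| = 1 and z₂ = z₃ = 0. If (a,b,z) = (a',b',z') + (a'',b'',z'') where both summands satisfy |z'ᵢ| ≤ min{√(a'ⱼb'ⱼ), √(a'ₖb'ₖ)} for the pairs required by membership in ℬ ∩ 𝒞 (i.e., S₁[1,3], S₁[2,4], S₁[1,2], S₁[3,4] for each summand, with nonnegative a', b', a'', b''), then (a',b',z') is a nonnegative multiple of (a'',b'',z'')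 or vice versa. -/
lemma sqrt_add_sqrt_le {x y u v : ℝ} (hx : 0 ≤ x) (hy : 0 ≤ y) (hu : 0 ≤ u) (hv : 0 ≤ v) :
    Real.sqrt (x*y) + Real.sqrt (u*v) ≤ Real.sqrt ((x+u)*(y+v)) := by
  have hs : 0 ≤ Real.sqrt (x*y) + Real.sqrt (u*v) := by positivity
  rw [← Real.sqrt_sq hs]
  apply Real.sqrt_le_sqrt
  have h1 := Real.sq_sqrt (mul_nonneg hx hy)
  have h2 := Real.sq_sqrt (mul_nonneg hu hv)
  have h3 : Real.sqrt (x*y) * Real.sqrt (u*v) = Real.sqrt (x*v) * Real.sqrt (u*y) := by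
    rw [← Real.sqrt_mul (mul_nonneg hx hy), ← Real.sqrt_mul (mul_nonneg hx hv)]
    ring_nf
  have h4 := Real.sq_sqrt (mul_nonneg hx hv)
  have h5 := Real.sq_sqrt (mul_nonneg hu hy)
  have h6 := sq_nonneg (Real.sqrt (x*v) - Real.sqrt (u*y))
  nlinarith [h1, h2, h3, h4, h5, h6]

lemma eq_of_sqrt_add {x y u v : ℝ} (hx : 0 ≤ x) (hy : 0 ≤ y) (hu : 0 ≤ u) (hv : 0 ≤ v)
    (h : Real.sqrt (x*y) + Real.sqrt (u*v) = Real.sqrt ((x+u)*(y+v))) : x*v = u*y := by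
  have hsq : (Real.sqrt (x*y) + Real.sqrt (u*v))^2 = (x+u)*(y+v) := by
    rw [h]; exact Real.sq_sqrt (by positivity)
  have h1 := Real.sq_sqrt (mul_nonneg hx hy)
  have h2 := Real.sq_sqrt (mul_nonneg hu hv)
  have h3 : Real.sqrt (x*y) * Real.sqrt (u*v) = Real.sqrt (x*v) * Real.sqrt (u*y) := by
    rw [← Real.sqrt_mul (mul_nonneg hx hy), ← Real.sqrt_mul (mul_nonneg hx hv)]
    ring_nf
  have h4 := Real.sq_sqrt (mul_nonneg hx hv)
  have h5 := Real.sq_sqrt (mul_nonneg hu hy)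
  have h7 : (Real.sqrt (x*v) - Real.sqrt (u*y))^2 = 0 := by nlinarith
  have h8 : Real.sqrt (x*v) = Real.sqrt (u*y) := by
    have := pow_eq_zero_iff (n := 2) (by norm_num) |>.mp h7
    linarith
  calc x*v = (Real.sqrt (x*v))^2 := h4.symm
  _ = (Real.sqrt (u*y))^2 := by rw [h8]
  _ = u*y := h5


/-- The inequality `S₁[i,j]` for a triple `(a,b,z)`. -/
def S1 (a b : Fin 4 → ℝ) (z : Fin 4 → ℂ) (i j : Fin 4) : Prop :=
  min (Real.sqrt (a i * b i)) (Real.sqrt (a j * b j)) ≥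
    max ‖z i‖ ‖z j‖

lemma S1.fst_fst {a b z i j} (h : S1 a b z i j) :
    ‖z i‖ ≤ Real.sqrt (a i * b i) :=
  le_trans (le_trans (le_max_left _ _) h) (min_le_left _ _)

lemma S1.fst_snd {a b z i j} (h : S1 a b z i j) :
    ‖z i‖ ≤ Real.sqrt (a j * b j) :=
  le_trans (le_trans (le_max_left _ _) h) (min_le_right _ _)

lemma S1.snd_snd {a b z i j} (h : S1 a b z i j) :
    ‖z j‖ ≤ Real.sqrt (a j * b j) :=
  le_trans (le_trans (le_max_right _ _) h) (min_le_right _ _)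


theorem extreme_S2e14_in_BC (a b a' b' a'' b'' : Fin 4 → ℝ) (z z' z'' : Fin 4 → ℂ)
    (ha : ∀ i, 0 ≤ a i) (hb : ∀ i, 0 ≤ b i)
    (ha4 : a 3 = 0) (hb4 : b 3 = 0) (hz4 : z 3 = 0)
    (h1 : Real.sqrt (a 0 * b 0) = 1) (h2 : Real.sqrt (a 1 * b 1) = 1)
    (h3 : Real.sqrt (a 2 * b 2) = 1) (hz1 : ‖z 0‖ = 1)
    (hz2 : z 1 = 0) (hz3 : z 2 = 0)
    (ha' : ∀ i, 0 ≤ a' i) (hb' : ∀ i, 0 ≤ b' i)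
    (ha'' : ∀ i, 0 ≤ a'' i) (hb'' : ∀ i, 0 ≤ b'' i)
    (hsum : a = a' + a'' ∧ b = b' + b'' ∧ z = z' + z'')
    (hB' : S1 a' b' z' 0 2 ∧ S1 a' b' z' 1 3)
    (hC' : S1 a' b' z' 0 1 ∧ S1 a' b' z' 2 3)
    (hB'' : S1 a'' b'' z'' 0 2 ∧ S1 a'' b'' z'' 1 3)
    (hC'' : S1 a'' b'' z'' 0 1 ∧ S1 a'' b'' z'' 2 3) :
    ∃ c : ℝ, 0 ≤ c ∧
      ((a' = c • a'' ∧ b' = c • b'' ∧ z' = (c : ℝ) • z'') ∨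
       (a'' = c • a' ∧ b'' = c • b' ∧ z'' = (c : ℝ) • z')) := by

  obtain ⟨hsa, hsb, hsz⟩ := hsum
  have haI : ∀ i, a i = a' i + a'' i := fun i => by rw [hsa]; rfl
  have hbI : ∀ i, b i = b' i + b'' i := fun i => by rw [hsb]; rfl
  have hzI : ∀ i, z i = z' i + z'' i := fun i => by rw [hsz]; rfl
  -- index-3 components vanish
  have ha'3 : a' 3 = 0 := by have := haI 3; have := ha' 3; have := ha'' 3; linarith [ha4 ▸ this]
  have ha''3 : a'' 3 = 0 := by have := haI 3; have := ha' 3; have := ha'' 3; linarith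
  have hb'3 : b' 3 = 0 := by have := hbI 3; have := hb' 3; have := hb'' 3; linarith
  have hb''3 : b'' 3 = 0 := by have := hbI 3; have := hb' 3; have := hb'' 3; linarith
  have hs'30 : Real.sqrt (a' 3 * b' 3) = 0 := by rw [ha'3]; simp
  have hs''30 : Real.sqrt (a'' 3 * b'' 3) = 0 := by rw [ha''3]; simp
  -- vanishing of z' and z'' at 1,2,3
  have habs0 : ∀ (w : ℂ), ‖w‖ ≤ 0 → w = 0 := fun w h =>
    norm_eq_zero.mp (le_antisymm h (norm_nonneg w))
  have hz'1 : z' 1 = 0 := habs0 _ (hs'30 ▸ hB'.2.fst_snd)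
  have hz'2 : z' 2 = 0 := habs0 _ (hs'30 ▸ hC'.2.fst_snd)
  have hz'3 : z' 3 = 0 := habs0 _ (hs'30 ▸ hC'.2.snd_snd)
  have hz''1 : z'' 1 = 0 := habs0 _ (hs''30 ▸ hB''.2.fst_snd)
  have hz''2 : z'' 2 = 0 := habs0 _ (hs''30 ▸ hC''.2.fst_snd)
  have hz''3 : z'' 3 = 0 := habs0 _ (hs''30 ▸ hC''.2.snd_snd)
  set t := ‖z' 0‖ with hT
  set s := ‖z'' 0‖ with hS
  have hts : 1 ≤ t + s := by
    calc (1:ℝ) = ‖z 0‖ := hz1.symm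
    _ = ‖z' 0 + z'' 0‖ := by rw [hzI 0]
    _ ≤ t + s := norm_add_le _ _
  have main : ∀ i : Fin 4, t ≤ Real.sqrt (a' i * b' i) → s ≤ Real.sqrt (a'' i * b'' i) →
      Real.sqrt (a i * b i) = 1 →
      a' i * b' i = t^2 ∧ a'' i * b'' i = s^2 ∧ a' i * b'' i = a'' i * b' i ∧ t + s = 1 := by
    intro i hti hsi hi
    have sub := sqrt_add_sqrt_le (ha' i) (hb' i) (ha'' i) (hb'' i)
    rw [← haI i, ← hbI i, hi] at sub
    have hA : Real.sqrt (a' i * b' i) = t := by linarith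
    have hB : Real.sqrt (a'' i * b'' i) = s := by linarith
    refine ⟨?_, ?_, ?_, by linarith⟩
    · rw [← hA]; exact (Real.sq_sqrt (mul_nonneg (ha' i) (hb' i))).symm
    · rw [← hB]; exact (Real.sq_sqrt (mul_nonneg (ha'' i) (hb'' i))).symm
    · apply eq_of_sqrt_add (ha' i) (hb' i) (ha'' i) (hb'' i)
      rw [← haI i, ← hbI i, hi, hA, hB]; linarith
  obtain ⟨P0a, P0b, P0c, htseq⟩ := main 0 hC'.1.fst_fst hC''.1.fst_fst h1
  obtain ⟨P1a, P1b, P1c, -⟩ := main 1 hC'.1.fst_snd hC''.1.fst_snd h2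
  obtain ⟨P2a, P2b, P2c, -⟩ := main 2 hB'.1.fst_snd hB''.1.fst_snd h3

  have fin4 : ∀ (P : Fin 4 → Prop), P 0 → P 1 → P 2 → P 3 → ∀ i, P i := by
    intro P p0 p1 p2 p3 i; fin_cases i <;> assumption
  have ht0 : 0 ≤ t := norm_nonneg _
  have hs0' : 0 ≤ s := norm_nonneg _
  rcases eq_or_lt_of_le hs0' with hs0 | hs0
  · -- s = 0 : second summand vanishes, c = 0
    have hteq : t = 1 := by linarith
    have zero'' : ∀ i : Fin 4, a' i * b' i = 1 → a i * b i = 1 →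
        a' i * b'' i = a'' i * b' i → a'' i = 0 ∧ b'' i = 0 := by
      intro i hp hq hc
      have hab : (a' i + a'' i) * (b' i + b'' i) = 1 := by rw [← haI i, ← hbI i]; exact hq
      have hzero : a' i * b'' i + a'' i * b' i + a'' i * b'' i = 0 := by
        linear_combination hab - hp
      have e1 : a' i * b'' i = 0 := by
        linarith [mul_nonneg (ha' i) (hb'' i), mul_nonneg (ha'' i) (hb' i),
          mul_nonneg (ha'' i) (hb'' i)]
      have e2 : a'' i * b' i = 0 := by
        linarith [mul_nonneg (ha' i) (hb'' i), mul_nonneg (ha'' i) (hb' i),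
          mul_nonneg (ha'' i) (hb'' i)]
      have hpa : 0 < a' i := by
        rcases (ha' i).lt_or_eq with h | h
        · exact h
        · exfalso; rw [← h] at hp; simp at hp
      have hpb : 0 < b' i := by
        rcases (hb' i).lt_or_eq with h | h
        · exact h
        · exfalso; rw [← h] at hp; simp at hp
      constructor
      · have := mul_eq_zero.mp e2
        rcases this with h | h
        · exact h
        · exact absurd h (ne_of_gt hpb)
      · have := mul_eq_zero.mp e1
        rcases this with h | h
        · exact absurd h (ne_of_gt hpa)
        · exact h
    have Q0 := zero'' 0 (by rw [P0a, hteq]; norm_num)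
      (by have := Real.sqrt_eq_one.mp h1; exact this) P0c
    have Q1 := zero'' 1 (by rw [P1a, hteq]; norm_num)
      (by have := Real.sqrt_eq_one.mp h2; exact this) P1c
    have Q2 := zero'' 2 (by rw [P2a, hteq]; norm_num)
      (by have := Real.sqrt_eq_one.mp h3; exact this) P2c
    have hz''0 : z'' 0 = 0 := habs0 _ (by rw [← hS, ← hs0])
    refine ⟨0, le_refl 0, Or.inr ⟨?_, ?_, ?_⟩⟩
    · funext i
      exact fin4 (fun i => a'' i = (0 • a') i)
        (by simpa using Q0.1) (by simpa using Q1.1) (by simpa using Q2.1)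
        (by simpa using ha''3) i
    · funext i
      exact fin4 (fun i => b'' i = (0 • b') i)
        (by simpa using Q0.2) (by simpa using Q1.2) (by simpa using Q2.2)
        (by simpa using hb''3) i
    · funext i
      exact fin4 (fun i => z'' i = ((0:ℝ) • z') i)
        (by simpa using hz''0) (by simpa using hz''1) (by simpa using hz''2)
        (by simpa using hz''3) i
  · -- s > 0 : first summand is r times the second
    have hz''ne : z'' 0 ≠ 0 := by
      intro h
      rw [hS, h] at hs0
      simp at hs0
    have hray : SameRay ℝ (z' 0) (z'' 0) := by
      rw [sameRay_iff_norm_add]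
      have : z' 0 + z'' 0 = z 0 := (hzI 0).symm
      rw [this]
      rw [hz1, ← hT, ← hS]
      linarith
    obtain ⟨r, hr0, hr⟩ := hray.symm.exists_nonneg_left hz''ne
    have htrs : t = r * s := by
      rw [hT, ← hr]
      rw [norm_smul]
      simp [Real.norm_eq_abs, abs_of_nonneg hr0, hS]
    have keyA : ∀ i : Fin 4, a' i * b' i = t^2 → a'' i * b'' i = s^2 →
        a' i * b'' i = a'' i * b' i → a' i = r * a'' i := by
      intro i Pa Pb Pc
      have key : (a' i * s)^2 = (a'' i * t)^2 := by
        linear_combination (a'' i)^2 * Pa - (a' i)^2 * Pb + (a' i * a'' i) * Pc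
      have h := congrArg Real.sqrt key
      rw [Real.sqrt_sq (mul_nonneg (ha' i) hs0'),
        Real.sqrt_sq (mul_nonneg (ha'' i) ht0)] at h
      have h2 : a' i * s = (r * a'' i) * s := by rw [h, htrs]; ring
      exact mul_right_cancel₀ (ne_of_gt hs0) h2
    have keyB : ∀ i : Fin 4, a' i * b' i = t^2 → a'' i * b'' i = s^2 →
        a' i * b'' i = a'' i * b' i → b' i = r * b'' i := by
      intro i Pa Pb Pc
      have key : (b' i * s)^2 = (b'' i * t)^2 := by
        linear_combination (b'' i)^2 * Pa - (b' i)^2 * Pb - (b' i * b'' i) * Pc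
      have h := congrArg Real.sqrt key
      rw [Real.sqrt_sq (mul_nonneg (hb' i) hs0'),
        Real.sqrt_sq (mul_nonneg (hb'' i) ht0)] at h
      have h2 : b' i * s = (r * b'' i) * s := by rw [h, htrs]; ring
      exact mul_right_cancel₀ (ne_of_gt hs0) h2
    refine ⟨r, hr0, Or.inl ⟨?_, ?_, ?_⟩⟩
    · funext i
      exact fin4 (fun i => a' i = (r • a'') i)
        (by simpa using keyA 0 P0a P0b P0c) (by simpa using keyA 1 P1a P1b P1c)
        (by simpa using keyA 2 P2a P2b P2c)
        (by simp [ha'3, ha''3]) i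
    · funext i
      exact fin4 (fun i => b' i = (r • b'') i)
        (by simpa using keyB 0 P0a P0b P0c) (by simpa using keyB 1 P1a P1b P1c)
        (by simpa using keyB 2 P2a P2b P2c)
        (by simp [hb'3, hb''3]) i
    · funext i
      exact fin4 (fun i => z' i = ((r:ℝ) • z'') i)
        (by simpa using hr.symm) (by simp [hz'1, hz''1]) (by simp [hz'2, hz''2])
        (by simp [hz'3, hz''3]) i
end

section
/- Let s, t ∈ ℝ⁴ be nonnegative and u, u', u'' ∈ ℂ⁴, s', t', s'', t'' nonnegative with (s,t,u) = (s',t',u') + (s'',t'',u''). Suppose √(sᵢtᵢ) = |uₖ|, sⱼ = tⱼ = 0, {k,ℓ} = {i,j}, and both summands satisfy √(s'ᵢt'ᵢ) + √(s'ⱼt'ⱼ) ≥ |u'ₖ| + |u'ₗ| and similarly for the double-primed triple. Then s'ⱼ = t'ⱼ = s''ⱼ = t''ⱼ = 0, u'ₗ = u''ₗ = 0, and (s'ᵢ, t'ᵢ, u'ₖ) is parallel to (s''ᵢ, t''ᵢ, u''ₖ) (one is a nonnegative multiple of the other). -/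
lemma sqrt_cs_aux (a b c d : ℝ) (ha : 0 ≤ a) (hb : 0 ≤ b) (hc : 0 ≤ c) (hd : 0 ≤ d) :
    Real.sqrt (a*c) + Real.sqrt (b*d) ≤ Real.sqrt ((a+b)*(c+d)) ∧
    (Real.sqrt ((a+b)*(c+d)) = Real.sqrt (a*c) + Real.sqrt (b*d) → a*d = b*c) := by
  have h1 : Real.sqrt (a*c) * Real.sqrt (b*d) = Real.sqrt (a*d) * Real.sqrt (b*c) := by
    rw [← Real.sqrt_mul (by positivity), ← Real.sqrt_mul (by positivity)]
    ring_nf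
  have hsq : (Real.sqrt (a*c) + Real.sqrt (b*d))^2
      = a*c + b*d + 2*(Real.sqrt (a*d) * Real.sqrt (b*c)) := by
    rw [add_sq, Real.sq_sqrt (by positivity), Real.sq_sqrt (by positivity), mul_assoc, h1]
    ring
  have h3 : 2*(Real.sqrt (a*d) * Real.sqrt (b*c)) ≤ a*d + b*c := by
    have h := two_mul_le_add_sq (Real.sqrt (a*d)) (Real.sqrt (b*c))
    rw [Real.sq_sqrt (by positivity), Real.sq_sqrt (by positivity)] at h
    linarith
  constructor
  · have hle : (Real.sqrt (a*c) + Real.sqrt (b*d))^2 ≤ (a+b)*(c+d) := by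
      rw [hsq]; nlinarith
    calc Real.sqrt (a*c) + Real.sqrt (b*d)
        = Real.sqrt ((Real.sqrt (a*c) + Real.sqrt (b*d))^2) := by
          rw [Real.sqrt_sq (by positivity)]
      _ ≤ Real.sqrt ((a+b)*(c+d)) := Real.sqrt_le_sqrt hle
  · intro heq
    have h4 : (a+b)*(c+d) = a*c + b*d + 2*(Real.sqrt (a*d) * Real.sqrt (b*c)) := by
      rw [← hsq, ← heq, Real.sq_sqrt (by positivity)]
    have h5 : Real.sqrt (a*d) = Real.sqrt (b*c) := by
      nlinarith [Real.sqrt_nonneg (a*d), Real.sqrt_nonneg (b*c),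
        Real.sq_sqrt (show (0:ℝ) ≤ a*d by positivity),
        Real.sq_sqrt (show (0:ℝ) ≤ b*c by positivity),
        sq_nonneg (Real.sqrt (a*d) - Real.sqrt (b*c))]
    calc a*d = Real.sqrt (a*d)^2 := (Real.sq_sqrt (by positivity)).symm
      _ = Real.sqrt (b*c)^2 := by rw [h5]
      _ = b*c := Real.sq_sqrt (by positivity)

theorem witness_CS_rigidity (s t s' t' s'' t'' : Fin 4 → ℝ) (u u' u'' : Fin 4 → ℂ)
    (i j k l : Fin 4) (hij : i ≠ j)
    (hkl : (k = i ∧ l = j) ∨ (k = j ∧ l = i))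
    (hs : ∀ m, 0 ≤ s m) (ht : ∀ m, 0 ≤ t m)
    (hs' : ∀ m, 0 ≤ s' m) (ht' : ∀ m, 0 ≤ t' m)
    (hs'' : ∀ m, 0 ≤ s'' m) (ht'' : ∀ m, 0 ≤ t'' m)
    (hsum : s = s' + s'' ∧ t = t' + t'' ∧ u = u' + u'')
    (hsat : Real.sqrt (s i * t i) = ‖u k‖)
    (hsj : s j = 0) (htj : t j = 0)
    (hW' : Real.sqrt (s' i * t' i) + Real.sqrt (s' j * t' j) ≥
      ‖u' k‖ + ‖u' l‖)
    (hW'' : Real.sqrt (s'' i * t'' i) + Real.sqrt (s'' j * t'' j) ≥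
      ‖u'' k‖ + ‖u'' l‖) :
    (s' j = 0 ∧ t' j = 0 ∧ s'' j = 0 ∧ t'' j = 0) ∧
    (u' l = 0 ∧ u'' l = 0) ∧
    (∃ c : ℝ, 0 ≤ c ∧
      ((s' i = c * s'' i ∧ t' i = c * t'' i ∧ u' k = (c : ℂ) * u'' k) ∨
       (s'' i = c * s' i ∧ t'' i = c * t' i ∧ u'' k = (c : ℂ) * u' k))) := by
  obtain ⟨hS, hT, hU⟩ := hsum
  have hSj : s' j + s'' j = 0 := by rw [← hsj, hS]; rfl
  have hTj : t' j + t'' j = 0 := by rw [← htj, hT]; rfl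
  have hs'j : s' j = 0 := by linarith [hs' j, hs'' j]
  have ht'j : t' j = 0 := by linarith [ht' j, ht'' j]
  have hs''j : s'' j = 0 := by linarith [hs' j, hs'' j]
  have ht''j : t'' j = 0 := by linarith [ht' j, ht'' j]
  rw [hs'j, zero_mul, Real.sqrt_zero, add_zero] at hW'
  rw [hs''j, zero_mul, Real.sqrt_zero, add_zero] at hW''
  set a := s' i with ha_def
  set b := s'' i with hb_def
  set c := t' i with hc_def
  set d := t'' i with hd_def
  have ha : 0 ≤ a := hs' i
  have hb : 0 ≤ b := hs'' i
  have hc : 0 ≤ c := ht' i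
  have hd : 0 ≤ d := ht'' i
  have hsi : s i = a + b := by rw [hS]; rfl
  have hti : t i = c + d := by rw [hT]; rfl
  have hui : u k = u' k + u'' k := by rw [hU]; rfl
  obtain ⟨hcs_le, hcs_eq⟩ := sqrt_cs_aux a b c d ha hb hc hd
  have hS_eq : Real.sqrt (s i * t i) = Real.sqrt ((a+b)*(c+d)) := by rw [hsi, hti]
  -- triangle inequality
  have htri : ‖u k‖ ≤ ‖u' k‖ + ‖u'' k‖ := by
    rw [hui]; exact norm_add_le _ _
  have hA := Real.sqrt_nonneg (a*c)
  have hB := Real.sqrt_nonneg (b*d)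
  have hul' : ‖u' l‖ = 0 := by
    have := norm_nonneg (u' l)
    have := norm_nonneg (u'' l)
    rw [hS_eq] at hsat
    linarith
  have hul'' : ‖u'' l‖ = 0 := by
    have := norm_nonneg (u' l)
    have := norm_nonneg (u'' l)
    rw [hS_eq] at hsat
    linarith
  have hAk : ‖u' k‖ = Real.sqrt (a*c) := by
    rw [hS_eq] at hsat; linarith [norm_nonneg (u' l), norm_nonneg (u'' l)]
  have hBk : ‖u'' k‖ = Real.sqrt (b*d) := by
    rw [hS_eq] at hsat; linarith [norm_nonneg (u' l), norm_nonneg (u'' l)]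
  have hSab : Real.sqrt ((a+b)*(c+d)) = Real.sqrt (a*c) + Real.sqrt (b*d) := by
    rw [hS_eq] at hsat; linarith [norm_nonneg (u' l), norm_nonneg (u'' l)]
  have hadbc : a * d = b * c := hcs_eq hSab
  have htri_eq : ‖u' k + u'' k‖ = ‖u' k‖ + ‖u'' k‖ := by
    rw [← hui, hAk, hBk, ← hSab, ← hS_eq]
    exact hsat.symm
  have hray : SameRay ℝ (u' k) (u'' k) := by
    rw [sameRay_iff_norm_add]
    simpa using htri_eq
  refine ⟨⟨hs'j, ht'j, hs''j, ht''j⟩,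
    ⟨by simpa using (norm_eq_zero.mp hul'), by simpa using (norm_eq_zero.mp hul'')⟩, ?_⟩
  rcases eq_or_lt_of_le hb with hb0 | hbpos
  · -- b = 0
    have hb0 : b = 0 := hb0.symm
    have hu''0 : u'' k = 0 := by
      have : ‖u'' k‖ = 0 := by rw [hBk, hb0, zero_mul, Real.sqrt_zero]
      exact norm_eq_zero.mp this
    rcases eq_or_lt_of_le hd with hd0 | hdpos
    · -- d = 0 : second disjunct with c = 0
      exact ⟨0, le_refl 0, Or.inr ⟨by rw [hb0, zero_mul], by rw [← hd0, zero_mul],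
        by rw [hu''0, Complex.ofReal_zero, zero_mul]⟩⟩
    · -- d > 0, so a = 0
      have ha0 : a = 0 := by
        have hz : a * d = 0 := by rw [hadbc, hb0, zero_mul]
        exact (mul_eq_zero.mp hz).resolve_right (ne_of_gt hdpos)
      have hu'0 : u' k = 0 := by
        have : ‖u' k‖ = 0 := by rw [hAk, ha0, zero_mul, Real.sqrt_zero]
        exact norm_eq_zero.mp this
      refine ⟨c / d, by positivity, Or.inl ⟨?_, ?_, ?_⟩⟩
      · rw [ha0, hb0, mul_zero]
      · exact (div_mul_cancel₀ c (ne_of_gt hdpos)).symm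
      · rw [hu'0, hu''0, mul_zero]
  · -- b > 0
    rcases eq_or_lt_of_le hd with hd0 | hdpos
    · -- d = 0, so c = 0
      have hc0 : c = 0 := by
        have hz : b * c = 0 := by rw [← hadbc, ← hd0, mul_zero]
        exact (mul_eq_zero.mp hz).resolve_left (ne_of_gt hbpos)
      have hu'0 : u' k = 0 := by
        have : ‖u' k‖ = 0 := by rw [hAk, hc0, mul_zero, Real.sqrt_zero]
        exact norm_eq_zero.mp this
      have hu''0 : u'' k = 0 := by
        have : ‖u'' k‖ = 0 := by rw [hBk, ← hd0, mul_zero, Real.sqrt_zero]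
        exact norm_eq_zero.mp this
      refine ⟨a / b, by positivity, Or.inl ⟨?_, ?_, ?_⟩⟩
      · exact (div_mul_cancel₀ a (ne_of_gt hbpos)).symm
      · rw [hc0, ← hd0, mul_zero]
      · rw [hu'0, hu''0, mul_zero]
    · -- main case b > 0, d > 0
      have hu''ne : u'' k ≠ 0 := by
        intro h
        rw [h, norm_zero] at hBk
        have : Real.sqrt (b*d) > 0 := Real.sqrt_pos.mpr (by positivity)
        linarith
      obtain ⟨r, hr0, hr⟩ := hray.symm.exists_nonneg_left hu''ne
      -- hr : r • u'' k = u' k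
      have habs : r * Real.sqrt (b*d) = Real.sqrt (a*c) := by
        have := congrArg norm hr
        rwa [norm_smul, Real.norm_of_nonneg hr0, hBk, hAk] at this
      have h1 : a * c = (r * Real.sqrt (b*d))^2 := by
        rw [habs, Real.sq_sqrt (by positivity)]
      have h2 : (r * Real.sqrt (b*d))^2 = r^2 * (b*d) := by
        rw [mul_pow, Real.sq_sqrt (by positivity)]
      have h3 : a * c = r^2 * (b*d) := h1.trans h2
      have hsq : a^2 * d = r^2 * b^2 * d :=
        calc a^2*d = a*(a*d) := by ring
          _ = a*(b*c) := by rw [hadbc]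
          _ = b*(a*c) := by ring
          _ = b*(r^2*(b*d)) := by rw [h3]
          _ = r^2*b^2*d := by ring
      have h4 : a ^ 2 = (r * b) ^ 2 :=
        mul_right_cancel₀ (ne_of_gt hdpos) (by linear_combination hsq)
      have hab : a = r * b := by
        have h5 : (a - r*b) * (a + r*b) = 0 := by linear_combination h4
        have hrb : 0 ≤ r * b := mul_nonneg hr0 hb
        rcases mul_eq_zero.mp h5 with h | h
        · linarith
        · linarith
      have hcd : c = r * d := by
        have h1 : b * c = b * (r * d) := by rw [← hadbc, hab]; ring
        exact mul_left_cancel₀ (ne_of_gt hbpos) h1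
      refine ⟨r, hr0, Or.inl ⟨hab, hcd, ?_⟩⟩
      rw [← hr, Complex.real_smul]
end

section
/- Let a, b ∈ ℝ⁴ be nonnegative and z ∈ ℂ⁴ with √(aᵢbᵢ) = |zᵢ| = 1 for all i ∈ {1,2,3,4}. Suppose (a,b,z) = (a',b',z') + (a'',b'',z'') where both summands have nonnegative a-,b-components and satisfy min{√(aᵢbᵢ), √(aⱼbⱼ)} ≥ max{|zᵢ|, |zⱼ|} for all i ≠ j. Then one summand is a nonnegative scalar multiple of the other. -/
theorem extreme_S3e_in_PPT (a b a' b' a'' b'' : Fin 4 → ℝ) (z z' z'' : Fin 4 → ℂ)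
    (ha : ∀ i, 0 ≤ a i) (hb : ∀ i, 0 ≤ b i)
    (hunit : ∀ i, Real.sqrt (a i * b i) = 1 ∧ ‖z i‖ = 1)
    (ha' : ∀ i, 0 ≤ a' i) (hb' : ∀ i, 0 ≤ b' i)
    (ha'' : ∀ i, 0 ≤ a'' i) (hb'' : ∀ i, 0 ≤ b'' i)
    (hsum : a = a' + a'' ∧ b = b' + b'' ∧ z = z' + z'')
    (hS1' : ∀ i j : Fin 4, i ≠ j →
      min (Real.sqrt (a' i * b' i)) (Real.sqrt (a' j * b' j)) ≥
        max (‖z' i‖) (‖z' j‖))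
    (hS1'' : ∀ i j : Fin 4, i ≠ j →
      min (Real.sqrt (a'' i * b'' i)) (Real.sqrt (a'' j * b'' j)) ≥
        max (‖z'' i‖) (‖z'' j‖)) :
    ∃ c : ℝ, 0 ≤ c ∧
      ((a' = c • a'' ∧ b' = c • b'' ∧ z' = (c : ℝ) • z'') ∨
       (a'' = c • a' ∧ b'' = c • b' ∧ z'' = (c : ℝ) • z')) := by
  obtain ⟨hsa, hsb, hsz⟩ := hsum
  have hab : ∀ i, a i * b i = 1 := fun i => Real.sqrt_eq_one.mp (hunit i).1
  set t : Fin 4 → ℝ := fun i => Real.sqrt (a' i * b' i) with ht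
  set s : Fin 4 → ℝ := fun i => Real.sqrt (a'' i * b'' i) with hs
  have ht0 : ∀ i, 0 ≤ t i := fun i => Real.sqrt_nonneg _
  have hs0 : ∀ i, 0 ≤ s i := fun i => Real.sqrt_nonneg _
  have ht2 : ∀ i, t i ^ 2 = a' i * b' i := fun i =>
    Real.sq_sqrt (mul_nonneg (ha' i) (hb' i))
  have hs2 : ∀ i, s i ^ 2 = a'' i * b'' i := fun i =>
    Real.sq_sqrt (mul_nonneg (ha'' i) (hb'' i))
  have other : ∀ i : Fin 4, ∃ j, i ≠ j := fun i => by
    fin_cases i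
    · exact ⟨1, by decide⟩
    · exact ⟨0, by decide⟩
    · exact ⟨0, by decide⟩
    · exact ⟨0, by decide⟩
  have htz' : ∀ i, ‖z' i‖ ≤ t i := fun i => by
    obtain ⟨j, hj⟩ := other i
    have h := hS1' i j hj
    calc ‖z' i‖ ≤ max (‖z' i‖) (‖z' j‖) :=
          le_max_left _ _
      _ ≤ min (t i) (t j) := h
      _ ≤ t i := min_le_left _ _
  have hsz'' : ∀ i, ‖z'' i‖ ≤ s i := fun i => by
    obtain ⟨j, hj⟩ := other i
    have h := hS1'' i j hj
    calc ‖z'' i‖ ≤ max (‖z'' i‖) (‖z'' j‖) :=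
          le_max_left _ _
      _ ≤ min (s i) (s j) := h
      _ ≤ s i := min_le_left _ _
  have hcross : ∀ i, t i * s i ≤ (a' i * b'' i + a'' i * b' i) / 2 := fun i => by
    have h1 : t i * s i = Real.sqrt ((a' i * b'' i) * (a'' i * b' i)) := by
      show Real.sqrt _ * Real.sqrt _ = _
      rw [← Real.sqrt_mul (mul_nonneg (ha' i) (hb' i))]
      congr 1; ring
    rw [h1]
    have h2 : (a' i * b'' i) * (a'' i * b' i) ≤ ((a' i * b'' i + a'' i * b' i) / 2) ^ 2 := by
      nlinarith [sq_nonneg (a' i * b'' i - a'' i * b' i)]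
    calc Real.sqrt ((a' i * b'' i) * (a'' i * b' i))
        ≤ Real.sqrt (((a' i * b'' i + a'' i * b' i) / 2) ^ 2) := Real.sqrt_le_sqrt h2
      _ = (a' i * b'' i + a'' i * b' i) / 2 := Real.sqrt_sq
          (div_nonneg (add_nonneg (mul_nonneg (ha' i) (hb'' i))
            (mul_nonneg (ha'' i) (hb' i))) (by norm_num))
  have hprsum : ∀ i, (a' i + a'' i) * (b' i + b'' i) = 1 := fun i => by
    have h1 := hab i
    rw [hsa, hsb] at h1
    simpa using h1
  have hzi : ∀ i, z i = z' i + z'' i := fun i => by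
    rw [hsz]; rfl
  have htri : ∀ i, 1 ≤ ‖z' i‖ + ‖z'' i‖ := fun i => by
    calc (1 : ℝ) = ‖z i‖ := ((hunit i).2).symm
      _ = ‖z' i + z'' i‖ := by rw [hzi i]
      _ ≤ _ := norm_add_le _ _
  have hts1 : ∀ i, t i + s i = 1 := fun i => by
    have h1 := hcross i; have h2 := hprsum i; have h3 := htri i
    have h4 := htz' i; have h5 := hsz'' i
    have hle : t i + s i ≤ 1 := by
      nlinarith [ht2 i, hs2 i, ht0 i, hs0 i, mul_nonneg (ht0 i) (hs0 i)]
    linarith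
  have habs' : ∀ i, ‖z' i‖ = t i := fun i =>
    le_antisymm (htz' i) (by linarith [htri i, hsz'' i, hts1 i])
  have habs'' : ∀ i, ‖z'' i‖ = s i := fun i =>
    le_antisymm (hsz'' i) (by linarith [htri i, htz' i, hts1 i])
  have hsum2 : ∀ i, a' i * b'' i + a'' i * b' i = 2 * (t i * s i) := fun i => by
    have h2 := hprsum i; have h3 := hts1 i; have h4 := ht2 i; have h5 := hs2 i
    have h6 : (t i + s i) ^ 2 = 1 := by rw [h3]; norm_num
    linear_combination h2 - h6 + h4 + h5
  have hprod : ∀ i, (a' i * b'' i) * (a'' i * b' i) = (t i * s i) ^ 2 := fun i => by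
    have h4 := ht2 i; have h5 := hs2 i
    nlinarith [h4, h5]
  have hpw : ∀ i, a' i * b'' i = t i * s i := fun i => by
    have h1 := hsum2 i; have h2 := hprod i
    have h3 : (a' i * b'' i - a'' i * b' i) ^ 2 = 0 := by
      linear_combination (a' i * b'' i + a'' i * b' i + 2 * (t i * s i)) * h1 - 4 * h2
    have h4 : a' i * b'' i - a'' i * b' i = 0 := by
      exact pow_eq_zero_iff (by norm_num) |>.mp h3
    linarith
  have hrq : ∀ i, a'' i * b' i = t i * s i := fun i => by
    have := hpw i; linarith [hsum2 i]
  have hmono : ∀ i j : Fin 4, i ≠ j → t i ≤ t j := fun i j hij => by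
    have h := hS1' i j hij
    calc t i = ‖z' i‖ := (habs' i).symm
      _ ≤ max (‖z' i‖) (‖z' j‖) := le_max_left _ _
      _ ≤ min (t i) (t j) := h
      _ ≤ t j := min_le_right _ _
  have hconst : ∀ i, t i = t 0 := fun i => by
    by_cases h : i = 0
    · rw [h]
    · exact le_antisymm (hmono i 0 h) (hmono 0 i (Ne.symm h))
  set T := t 0 with hT
  have hT0 : 0 ≤ T := ht0 0
  have hT1 : T ≤ 1 := by linarith [hts1 0, hs0 0]
  have hsconst : ∀ i, s i = 1 - T := fun i => by
    have := hts1 i; have := hconst i; linarith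
  have hz' : ∀ i, z' i = (T : ℂ) * z i := fun i => by
    have h1 : ‖z' i‖ = T := by rw [habs' i, hconst i]
    have h2 : ‖z'' i‖ = 1 - T := by rw [habs'' i, hsconst i]
    have h3 : ‖z i‖ = 1 := (hunit i).2
    have hzz : z'' i = z i - z' i := by rw [hzi i]; ring
    have e1 : (z' i).re * (z' i).re + (z' i).im * (z' i).im = T * T := by
      have h := Complex.sq_norm (z' i)
      rw [h1, Complex.normSq_apply] at h
      linear_combination -h
    have e3 : (z i).re * (z i).re + (z i).im * (z i).im = 1 := by
      have h := Complex.sq_norm (z i)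
      rw [h3, Complex.normSq_apply] at h
      linear_combination -h
    have e2 : ((z i).re - (z' i).re) * ((z i).re - (z' i).re)
        + ((z i).im - (z' i).im) * ((z i).im - (z' i).im) = (1 - T) * (1 - T) := by
      have h := Complex.sq_norm (z'' i)
      rw [h2, hzz, Complex.normSq_apply, Complex.sub_re, Complex.sub_im] at h
      linear_combination -h
    have key : ((z' i).re - T * (z i).re) ^ 2 + ((z' i).im - T * (z i).im) ^ 2 = 0 := by
      linear_combination (1 - T) * e1 + T * e2 + (T ^ 2 - T) * e3
    have k1 : (z' i).re = T * (z i).re := by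
      have k0 : ((z' i).re - T * (z i).re) ^ 2 = 0 := by
        nlinarith [sq_nonneg ((z' i).im - T * (z i).im)]
      have := pow_eq_zero_iff (n := 2) (by norm_num) |>.mp k0
      linarith
    have k2 : (z' i).im = T * (z i).im := by
      have k0 : ((z' i).im - T * (z i).im) ^ 2 = 0 := by
        nlinarith [sq_nonneg ((z' i).re - T * (z i).re)]
      have := pow_eq_zero_iff (n := 2) (by norm_num) |>.mp k0
      linarith
    refine Complex.ext ?_ ?_
    · simpa [Complex.mul_re] using k1
    · simpa [Complex.mul_im] using k2
  have hz'' : ∀ i, z'' i = ((1 : ℂ) - (T : ℂ)) * z i := fun i => by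
    have h := hzi i
    rw [hz' i] at h
    linear_combination -h
  rcases eq_or_lt_of_le hT1 with hTeq | hTlt
  · -- T = 1 : second summand vanishes
    refine ⟨0, le_refl 0, Or.inr ⟨?_, ?_, ?_⟩⟩
    · funext i
      have h1 : a' i * b' i = 1 := by
        have h := ht2 i
        rw [hconst i, hTeq] at h
        norm_num at h
        linarith
      have hbpos : 0 < b' i := by nlinarith [ha' i, hb' i]
      have h := hrq i
      rw [hconst i, hsconst i, hTeq] at h
      norm_num at h
      rcases h with h | h
      · simpa using h
      · exfalso; linarith
    · funext i
      have h1 : a' i * b' i = 1 := by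
        have h := ht2 i
        rw [hconst i, hTeq] at h
        norm_num at h
        linarith
      have hapos : 0 < a' i := by nlinarith [ha' i, hb' i]
      have h := hpw i
      rw [hconst i, hsconst i, hTeq] at h
      norm_num at h
      rcases h with h | h
      · exfalso; linarith
      · simpa using h
    · funext i
      have h := hz'' i
      rw [hTeq] at h
      norm_num at h
      show z'' i = (0 : ℝ) • z' i
      simp [h]
  · -- T < 1
    refine ⟨T / (1 - T), div_nonneg hT0 (by linarith), Or.inl ⟨?_, ?_, ?_⟩⟩
    · funext i
      have h1 : a' i * b'' i = T * (1 - T) := by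
        rw [hpw i, hconst i, hsconst i]
      have h2 : a'' i * b'' i = (1 - T) ^ 2 := by
        rw [← hs2 i, hsconst i]
      have hbpos : 0 < b'' i := by nlinarith [ha'' i, hb'' i]
      show a' i = (T / (1 - T)) * a'' i
      rw [div_mul_eq_mul_div, eq_div_iff (by linarith : (1 : ℝ) - T ≠ 0)]
      have key : a' i * (1 - T) * b'' i = T * a'' i * b'' i := by
        linear_combination (1 - T) * h1 - T * h2
      have := mul_right_cancel₀ (ne_of_gt hbpos) key
      linarith
    · funext i
      have h1 : a'' i * b' i = T * (1 - T) := by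
        rw [hrq i, hconst i, hsconst i]
      have h2 : a'' i * b'' i = (1 - T) ^ 2 := by
        rw [← hs2 i, hsconst i]
      have hapos : 0 < a'' i := by nlinarith [ha'' i, hb'' i]
      show b' i = (T / (1 - T)) * b'' i
      rw [div_mul_eq_mul_div, eq_div_iff (by linarith : (1 : ℝ) - T ≠ 0)]
      have key : b' i * (1 - T) * a'' i = T * b'' i * a'' i := by
        linear_combination (1 - T) * h1 - T * h2
      have := mul_right_cancel₀ (ne_of_gt hapos) key
      linarith
    · funext i
      show z' i = (T / (1 - T) : ℝ) • z'' i
      rw [hz' i, hz'' i, Complex.real_smul]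
      have h1T : ((1 : ℂ) - (T : ℂ)) ≠ 0 := by
        have : ((1 : ℝ) - T : ℝ) ≠ 0 := by linarith
        simpa using Complex.ofReal_ne_zero.mpr this
      push_cast
      field_simp
end

section
/- Let a, b ∈ ℝ⁴ be nonnegative and z ∈ ℂ⁴ with √(a₁b₁) = √(a₄b₄) = |z₁| = |z₄| = 1 and a₂ = a₃ = b₂ = b₃ = 0, z₂ = z₃ = 0. Suppose (a,b,z) = (a',b',z') + (a'',b'',z'') where both summands have nonnegative a-, b-components and satisfy S₁[1,4] and S₁[2,3] (i.e., min{√(a₁b₁),√(a₄b₄)} ≥ max{|z₁|,|z₄|} and min{√(a₂b₂),√(a₃b₃)} ≥ max{|z₂|,|z₃|}). Then one summand is a nonnegative multiple of the other. -/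
private lemma chain (A' B' A'' B'' : ℝ) (Z' Z'' : ℂ)
    (hA' : 0 ≤ A') (hB' : 0 ≤ B') (hA'' : 0 ≤ A'') (hB'' : 0 ≤ B'')
    (hprod : (A' + A'') * (B' + B'') = 1)
    (habs : ‖Z' + Z''‖ = 1)
    (h1 : ‖Z'‖ ≤ Real.sqrt (A' * B'))
    (h2 : ‖Z''‖ ≤ Real.sqrt (A'' * B'')) :
    ‖Z'‖ = Real.sqrt (A' * B') ∧ ‖Z''‖ = Real.sqrt (A'' * B'')
      ∧ ‖Z'‖ + ‖Z''‖ = 1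
      ∧ A' * B'' = A'' * B'
      ∧ SameRay ℝ Z' Z'' := by
  set s := Real.sqrt (A' * B') with hs
  set t := Real.sqrt (A'' * B'') with ht
  have hs0 : 0 ≤ s := Real.sqrt_nonneg _
  have ht0 : 0 ≤ t := Real.sqrt_nonneg _
  have hs2 : s ^ 2 = A' * B' := Real.sq_sqrt (mul_nonneg hA' hB')
  have ht2 : t ^ 2 = A'' * B'' := Real.sq_sqrt (mul_nonneg hA'' hB'')
  set u := Real.sqrt (A' * B'') with hu
  set v := Real.sqrt (A'' * B') with hv
  have hu2 : u ^ 2 = A' * B'' := Real.sq_sqrt (mul_nonneg hA' hB'')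
  have hv2 : v ^ 2 = A'' * B' := Real.sq_sqrt (mul_nonneg hA'' hB')
  have huv : u * v = s * t := by
    rw [hu, hv, hs, ht, ← Real.sqrt_mul (mul_nonneg hA' hB''),
      ← Real.sqrt_mul (mul_nonneg hA' hB')]
    ring_nf
  have hsq : (s + t) ^ 2 ≤ 1 := by nlinarith [sq_nonneg (u - v)]
  have htri : 1 ≤ ‖Z'‖ + ‖Z''‖ := by
    calc (1 : ℝ) = ‖Z' + Z''‖ := habs.symm
      _ ≤ _ := norm_add_le _ _
  have hst1 : s + t ≤ 1 := by nlinarith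
  have habs' : ‖Z'‖ + ‖Z''‖ = 1 :=
    le_antisymm (by linarith [add_le_add h1 h2]) htri
  have hseq : s + t = 1 := le_antisymm hst1 (by linarith [add_le_add h1 h2])
  have heq1 : ‖Z'‖ = s := le_antisymm h1 (by linarith)
  have heq2 : ‖Z''‖ = t := by linarith
  have huveq : (u - v) ^ 2 = 0 := by
    have h2uv : 2 * (u * v) = u ^ 2 + v ^ 2 := by nlinarith
    nlinarith
  have huveq' : u = v := by
    have := pow_eq_zero_iff (n := 2) (by norm_num) |>.mp huveq
    linarith
  refine ⟨heq1, heq2, habs', ?_, ?_⟩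
  · rw [← hu2, ← hv2, huveq']
  · refine sameRay_iff_norm_add.mpr ?_
    rw [habs, habs']

private lemma ratio (A' B' A'' B'' r' r'' : ℝ)
    (hA' : 0 ≤ A') (hB' : 0 ≤ B') (hA'' : 0 ≤ A'') (hB'' : 0 ≤ B'')
    (h1 : A' * B' = r' ^ 2) (h2 : A'' * B'' = r'' ^ 2) (h3 : A' * B'' = A'' * B')
    (hr' : 0 ≤ r') (hr'' : 0 < r'') :
    A' = (r' / r'') * A'' ∧ B' = (r' / r'') * B'' := by
  have hA''pos : 0 < A'' := by nlinarith
  have hB''pos : 0 < B'' := by nlinarith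
  have hsq : (A' * B'') ^ 2 = (r' * r'') ^ 2 := by
    have h : (A' * B'') ^ 2 = (A' * B') * (A'' * B'') := by
      rw [pow_two]
      nth_rewrite 2 [h3]
      ring
    rw [h, h1, h2]; ring
  have hAB : A' * B'' = r' * r'' := by
    have := Real.sqrt_sq (mul_nonneg hA' hB'')
    rw [← this, hsq, Real.sqrt_sq (mul_nonneg hr' hr''.le)]
  have hBA : A'' * B' = r' * r'' := by rw [← h3]; exact hAB
  constructor
  · have key : A' * r'' * r'' = r' * A'' * r'' := by
      linear_combination A'' * hAB - A' * h2
    have key2 : A' * r'' = r' * A'' := mul_right_cancel₀ hr''.ne' key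
    field_simp
    linarith
  · have key : B' * r'' * r'' = r' * B'' * r'' := by
      linear_combination B'' * hBA - B' * h2
    have key2 : B' * r'' = r' * B'' := mul_right_cancel₀ hr''.ne' key
    field_simp
    linarith

private lemma pos_left_of_mul_eq_one {x y : ℝ} (hx : 0 ≤ x) (h : x * y = 1) : 0 < x := by
  rcases hx.lt_or_eq with h' | h'
  · exact h'
  · rw [← h', zero_mul] at h
    norm_num at h

private lemma pos_right_of_mul_eq_one {x y : ℝ} (hy : 0 ≤ y) (h : x * y = 1) : 0 < y := by
  exact pos_left_of_mul_eq_one hy (by rw [mul_comm]; exact h)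

theorem extreme_S1e14_in_A (a b a' b' a'' b'' : Fin 4 → ℝ) (z z' z'' : Fin 4 → ℂ)
    (ha : ∀ i, 0 ≤ a i) (hb : ∀ i, 0 ≤ b i)
    (h1 : Real.sqrt (a 0 * b 0) = 1) (h4 : Real.sqrt (a 3 * b 3) = 1)
    (hz1 : ‖z 0‖ = 1) (hz4 : ‖z 3‖ = 1)
    (ha2 : a 1 = 0) (ha3 : a 2 = 0) (hb2 : b 1 = 0) (hb3 : b 2 = 0)
    (hz2 : z 1 = 0) (hz3 : z 2 = 0)
    (ha' : ∀ i, 0 ≤ a' i) (hb' : ∀ i, 0 ≤ b' i)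
    (ha'' : ∀ i, 0 ≤ a'' i) (hb'' : ∀ i, 0 ≤ b'' i)
    (hsum : a = a' + a'' ∧ b = b' + b'' ∧ z = z' + z'')
    (hA' : S1 a' b' z' 0 3 ∧ S1 a' b' z' 1 2)
    (hA'' : S1 a'' b'' z'' 0 3 ∧ S1 a'' b'' z'' 1 2) :
    ∃ c : ℝ, 0 ≤ c ∧
      ((a' = c • a'' ∧ b' = c • b'' ∧ z' = (c : ℝ) • z'') ∨
       (a'' = c • a' ∧ b'' = c • b' ∧ z'' = (c : ℝ) • z')) := by
  obtain ⟨hsa, hsb, hsz⟩ := hsum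
  have ea : ∀ i, a i = a' i + a'' i := fun i => by rw [hsa]; rfl
  have eb : ∀ i, b i = b' i + b'' i := fun i => by rw [hsb]; rfl
  have ez : ∀ i, z i = z' i + z'' i := fun i => by rw [hsz]; rfl
  -- zeros at indices 1 and 2
  have ha'1 : a' 1 = 0 := by have := ea 1; have := ha' 1; have := ha'' 1; linarith
  have ha''1 : a'' 1 = 0 := by have := ea 1; have := ha' 1; have := ha'' 1; linarith
  have ha'2 : a' 2 = 0 := by have := ea 2; have := ha' 2; have := ha'' 2; linarith
  have ha''2 : a'' 2 = 0 := by have := ea 2; have := ha' 2; have := ha'' 2; linarith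
  have hb'1 : b' 1 = 0 := by have := eb 1; have := hb' 1; have := hb'' 1; linarith
  have hb''1 : b'' 1 = 0 := by have := eb 1; have := hb' 1; have := hb'' 1; linarith
  have hb'2 : b' 2 = 0 := by have := eb 2; have := hb' 2; have := hb'' 2; linarith
  have hb''2 : b'' 2 = 0 := by have := eb 2; have := hb' 2; have := hb'' 2; linarith
  have hz'1 : z' 1 = 0 := by
    have h := hA'.2
    simp only [S1, ha'1, hb'1, ha'2, hb'2, zero_mul, mul_zero, Real.sqrt_zero,
      min_self, ge_iff_le, max_le_iff] at h
    exact norm_eq_zero.mp (le_antisymm h.1 (norm_nonneg _))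
  have hz'2 : z' 2 = 0 := by
    have h := hA'.2
    simp only [S1, ha'1, hb'1, ha'2, hb'2, zero_mul, mul_zero, Real.sqrt_zero,
      min_self, ge_iff_le, max_le_iff] at h
    exact norm_eq_zero.mp (le_antisymm h.2 (norm_nonneg _))
  have hz''1 : z'' 1 = 0 := by
    have h := hA''.2
    simp only [S1, ha''1, hb''1, ha''2, hb''2, zero_mul, mul_zero, Real.sqrt_zero,
      min_self, ge_iff_le, max_le_iff] at h
    exact norm_eq_zero.mp (le_antisymm h.1 (norm_nonneg _))
  have hz''2 : z'' 2 = 0 := by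
    have h := hA''.2
    simp only [S1, ha''1, hb''1, ha''2, hb''2, zero_mul, mul_zero, Real.sqrt_zero,
      min_self, ge_iff_le, max_le_iff] at h
    exact norm_eq_zero.mp (le_antisymm h.2 (norm_nonneg _))
  -- the four basic inequalities from S1[0,3]
  have hS' := hA'.1
  have hS'' := hA''.1
  simp only [S1, ge_iff_le, max_le_iff, le_min_iff] at hS' hS''
  -- products equal 1
  have hab0 : (a' 0 + a'' 0) * (b' 0 + b'' 0) = 1 := by
    rw [← ea 0, ← eb 0]; exact Real.sqrt_eq_one.mp h1
  have hab3 : (a' 3 + a'' 3) * (b' 3 + b'' 3) = 1 := by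
    rw [← ea 3, ← eb 3]; exact Real.sqrt_eq_one.mp h4
  have habs0 : ‖z' 0 + z'' 0‖ = 1 := by rw [← ez 0]; exact hz1
  have habs3 : ‖z' 3 + z'' 3‖ = 1 := by rw [← ez 3]; exact hz4
  obtain ⟨e0', e0'', esum0, ecross0, eray0⟩ :=
    chain (a' 0) (b' 0) (a'' 0) (b'' 0) (z' 0) (z'' 0) (ha' 0) (hb' 0) (ha'' 0) (hb'' 0)
      hab0 habs0 hS'.1.1 hS''.1.1
  obtain ⟨e3', e3'', esum3, ecross3, eray3⟩ :=
    chain (a' 3) (b' 3) (a'' 3) (b'' 3) (z' 3) (z'' 3) (ha' 3) (hb' 3) (ha'' 3) (hb'' 3)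
      hab3 habs3 hS'.2.2 hS''.2.2
  -- s' = t' (all four sqrt values equal the corresponding abs)
  have hst' : Real.sqrt (a' 0 * b' 0) = Real.sqrt (a' 3 * b' 3) := by
    have h1' := hS'.1.2   -- |z'0| ≤ t'
    have h2' := hS'.2.1   -- |z'3| ≤ s'
    linarith [e0', e3']
  have hst'' : Real.sqrt (a'' 0 * b'' 0) = Real.sqrt (a'' 3 * b'' 3) := by
    have h1' := hS''.1.2
    have h2' := hS''.2.1
    linarith [e0'', e3'']
  have habs3' : ‖z' 3‖ = ‖z' 0‖ := by rw [e0', e3', hst']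
  have habs3'' : ‖z'' 3‖ = ‖z'' 0‖ := by rw [e0'', e3'', hst'']
  set r' := ‖z' 0‖ with hr'def
  set r'' := ‖z'' 0‖ with hr''def
  have hr'0 : 0 ≤ r' := norm_nonneg _
  have hr''0 : 0 ≤ r'' := norm_nonneg _
  have hp'0 : a' 0 * b' 0 = r' ^ 2 := by
    rw [e0', Real.sq_sqrt (mul_nonneg (ha' 0) (hb' 0))]
  have hp''0 : a'' 0 * b'' 0 = r'' ^ 2 := by
    rw [e0'', Real.sq_sqrt (mul_nonneg (ha'' 0) (hb'' 0))]
  have hp'3 : a' 3 * b' 3 = r' ^ 2 := by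
    rw [e0', hst', Real.sq_sqrt (mul_nonneg (ha' 3) (hb' 3))]
  have hp''3 : a'' 3 * b'' 3 = r'' ^ 2 := by
    rw [e0'', hst'', Real.sq_sqrt (mul_nonneg (ha'' 3) (hb'' 3))]
  rcases eq_or_lt_of_le hr''0 with hzero | hpos
  · -- r'' = 0 : the second summand vanishes
    have hr'1 : r' = 1 := by linarith [esum0]
    have hz''0 : z'' 0 = 0 := norm_eq_zero.mp hzero.symm
    have hz''3 : z'' 3 = 0 := by
      apply norm_eq_zero.mp
      rw [habs3'']; exact hzero.symm
    have hp'0' : a' 0 * b' 0 = 1 := by rw [hp'0, hr'1]; norm_num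
    have hp'3' : a' 3 * b' 3 = 1 := by rw [hp'3, hr'1]; norm_num
    have hprod0 : a'' 0 * b'' 0 = 0 := by rw [hp''0, ← hzero]; ring
    have hprod3 : a'' 3 * b'' 3 = 0 := by rw [hp''3, ← hzero]; ring
    have ha'0pos : 0 < a' 0 := pos_left_of_mul_eq_one (ha' 0) hp'0'
    have hb'0pos : 0 < b' 0 := pos_right_of_mul_eq_one (hb' 0) hp'0'
    have ha'3pos : 0 < a' 3 := pos_left_of_mul_eq_one (ha' 3) hp'3'
    have hb'3pos : 0 < b' 3 := pos_right_of_mul_eq_one (hb' 3) hp'3'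
    have ha''0z : a'' 0 = 0 ∧ b'' 0 = 0 := by
      rcases mul_eq_zero.mp hprod0 with h | h
      · refine ⟨h, ?_⟩
        have : a' 0 * b'' 0 = 0 := by rw [ecross0, h]; ring
        rcases mul_eq_zero.mp this with h' | h'
        · exact absurd h' ha'0pos.ne'
        · exact h'
      · refine ⟨?_, h⟩
        have : a'' 0 * b' 0 = 0 := by rw [← ecross0, h]; ring
        rcases mul_eq_zero.mp this with h' | h'
        · exact h'
        · exact absurd h' hb'0pos.ne'
    have ha''3z : a'' 3 = 0 ∧ b'' 3 = 0 := by
      rcases mul_eq_zero.mp hprod3 with h | h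
      · refine ⟨h, ?_⟩
        have : a' 3 * b'' 3 = 0 := by rw [ecross3, h]; ring
        rcases mul_eq_zero.mp this with h' | h'
        · exact absurd h' ha'3pos.ne'
        · exact h'
      · refine ⟨?_, h⟩
        have : a'' 3 * b' 3 = 0 := by rw [← ecross3, h]; ring
        rcases mul_eq_zero.mp this with h' | h'
        · exact h'
        · exact absurd h' hb'3pos.ne'
    refine ⟨0, le_refl 0, Or.inr ⟨?_, ?_, ?_⟩⟩
    · rw [zero_smul]
      funext i
      fin_cases i
      · exact ha''0z.1
      · exact ha''1
      · exact ha''2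
      · exact ha''3z.1
    · rw [zero_smul]
      funext i
      fin_cases i
      · exact ha''0z.2
      · exact hb''1
      · exact hb''2
      · exact ha''3z.2
    · rw [zero_smul]
      funext i
      fin_cases i
      · exact hz''0
      · exact hz''1
      · exact hz''2
      · exact hz''3
  · -- r'' > 0
    set c := r' / r'' with hcdef
    have hc0 : 0 ≤ c := div_nonneg hr'0 hr''0
    obtain ⟨hra0, hrb0⟩ := ratio (a' 0) (b' 0) (a'' 0) (b'' 0) r' r''
      (ha' 0) (hb' 0) (ha'' 0) (hb'' 0) hp'0 hp''0 ecross0 hr'0 hpos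
    obtain ⟨hra3, hrb3⟩ := ratio (a' 3) (b' 3) (a'' 3) (b'' 3) r' r''
      (ha' 3) (hb' 3) (ha'' 3) (hb'' 3) hp'3 hp''3 ecross3 hr'0 hpos
    have hray0 : r' • z'' 0 = r'' • z' 0 := by
      have := eray0.norm_smul_eq
      simpa using this
    have hray3 : r' • z'' 3 = r'' • z' 3 := by
      have := eray3.norm_smul_eq
      have h := this
      simp only [habs3', habs3''] at h
      exact h
    have hz0eq : z' 0 = c • z'' 0 := by
      rw [hcdef, div_eq_inv_mul, mul_smul, hray0, smul_smul,
        inv_mul_cancel₀ hpos.ne', one_smul]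
    have hz3eq : z' 3 = c • z'' 3 := by
      rw [hcdef, div_eq_inv_mul, mul_smul, hray3, smul_smul,
        inv_mul_cancel₀ hpos.ne', one_smul]
    refine ⟨c, hc0, Or.inl ⟨?_, ?_, ?_⟩⟩
    · funext i
      fin_cases i
      · show a' 0 = c * a'' 0
        rw [hcdef]; exact hra0
      · show a' 1 = c * a'' 1
        rw [ha'1, ha''1, mul_zero]
      · show a' 2 = c * a'' 2
        rw [ha'2, ha''2, mul_zero]
      · show a' 3 = c * a'' 3
        rw [hcdef]; exact hra3
    · funext i
      fin_cases i
      · show b' 0 = c * b'' 0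
        rw [hcdef]; exact hrb0
      · show b' 1 = c * b'' 1
        rw [hb'1, hb''1, mul_zero]
      · show b' 2 = c * b'' 2
        rw [hb'2, hb''2, mul_zero]
      · show b' 3 = c * b'' 3
        rw [hcdef]; exact hrb3
    · funext i
      fin_cases i
      · exact hz0eq
      · show z' 1 = c • z'' 1
        rw [hz'1, hz''1, smul_zero]
      · show z' 2 = c • z'' 2
        rw [hz'2, hz''2, smul_zero]
      · exact hz3eq
end

section
/- Let r > 0, θ ∈ ℝ, and set (s,t,u) with s₁ = r, t₁ = 1/r, u₄ = e^{iθ}, and all other coordinates zero. Suppose (s,t,u) = (s',t',u') + (s'',t'',u'') with nonnegative s-, t-components such that both summands satisfy Σᵢ √(s'ᵢt'ᵢ) ≥ Σᵢ |u'ᵢ| and Σᵢ √(s''ᵢt''ᵢ) ≥ Σᵢ |u''ᵢ|. Then one summand is a nonnegative multiple of the other. -/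
private lemma pos_left_of_mul_pos' {x y : ℝ} (hx : 0 ≤ x) (h : 0 < x * y) : 0 < x := by
  rcases hx.lt_or_eq with h' | h'
  · exact h'
  · exfalso; rw [← h', zero_mul] at h; exact lt_irrefl 0 h

private lemma pos_right_of_mul_pos' {x y : ℝ} (hy : 0 ≤ y) (h : 0 < x * y) : 0 < y := by
  rcases hy.lt_or_eq with h' | h'
  · exact h'
  · exfalso; rw [← h', mul_zero] at h; exact lt_irrefl 0 h

set_option maxHeartbeats 1000000 in
theorem extreme_witness_W3 (r θ : ℝ) (hr : 0 < r)
    (s t s' t' s'' t'' : Fin 4 → ℝ) (u u' u'' : Fin 4 → ℂ)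
    (hs1 : s 0 = r) (ht1 : t 0 = 1 / r)
    (hu4 : u 3 = Complex.exp (θ * Complex.I))
    (hs0 : ∀ i, i ≠ 0 → s i = 0) (ht0 : ∀ i, i ≠ 0 → t i = 0)
    (hu0 : ∀ i, i ≠ 3 → u i = 0)
    (hs' : ∀ i, 0 ≤ s' i) (ht' : ∀ i, 0 ≤ t' i)
    (hs'' : ∀ i, 0 ≤ s'' i) (ht'' : ∀ i, 0 ≤ t'' i)
    (hsum : s = s' + s'' ∧ t = t' + t'' ∧ u = u' + u'')
    (hW3' : ∑ i, Real.sqrt (s' i * t' i) ≥ ∑ i, ‖u' i‖)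
    (hW3'' : ∑ i, Real.sqrt (s'' i * t'' i) ≥ ∑ i, ‖u'' i‖) :
    ∃ c : ℝ, 0 ≤ c ∧
      ((s' = c • s'' ∧ t' = c • t'' ∧ u' = (c : ℝ) • u'') ∨
       (s'' = c • s' ∧ t'' = c • t' ∧ u'' = (c : ℝ) • u')) := by
  obtain ⟨hS, hT, hU⟩ := hsum
  have hSi : ∀ i, s i = s' i + s'' i := fun i => congrFun hS i
  have hTi : ∀ i, t i = t' i + t'' i := fun i => congrFun hT i
  have hUi : ∀ i, u i = u' i + u'' i := fun i => congrFun hU i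
  have hs'z : ∀ i, i ≠ 0 → s' i = 0 := by
    intro i hi
    have h := hSi i; rw [hs0 i hi] at h
    linarith [hs' i, hs'' i]
  have hs''z : ∀ i, i ≠ 0 → s'' i = 0 := by
    intro i hi
    have h := hSi i; rw [hs0 i hi] at h
    linarith [hs' i, hs'' i]
  have ht'z : ∀ i, i ≠ 0 → t' i = 0 := by
    intro i hi
    have h := hTi i; rw [ht0 i hi] at h
    linarith [ht' i, ht'' i]
  have ht''z : ∀ i, i ≠ 0 → t'' i = 0 := by
    intro i hi
    have h := hTi i; rw [ht0 i hi] at h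
    linarith [ht' i, ht'' i]
  set a := s' 0 with ha_def
  set b := t' 0 with hb_def
  set c := s'' 0 with hc_def
  set d := t'' 0 with hd_def
  have ha0 : 0 ≤ a := hs' 0
  have hb0 : 0 ≤ b := ht' 0
  have hc0 : 0 ≤ c := hs'' 0
  have hd0 : 0 ≤ d := ht'' 0
  have hac : a + c = r := by have := hSi 0; rw [hs1] at this; linarith
  have hbd : b + d = 1 / r := by have := hTi 0; rw [ht1] at this; linarith
  set A := Real.sqrt (a * b) with hA_def
  set B := Real.sqrt (c * d) with hB_def
  have hA0 : 0 ≤ A := Real.sqrt_nonneg _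
  have hB0 : 0 ≤ B := Real.sqrt_nonneg _
  have hA2 : A ^ 2 = a * b := Real.sq_sqrt (by positivity)
  have hB2 : B ^ 2 = c * d := Real.sq_sqrt (by positivity)
  have sum' : ∑ i, Real.sqrt (s' i * t' i) = A := by
    rw [Fin.sum_univ_four, hs'z 1 (by decide), hs'z 2 (by decide), hs'z 3 (by decide)]
    simp [hA_def, ha_def, hb_def]
  have sum'' : ∑ i, Real.sqrt (s'' i * t'' i) = B := by
    rw [Fin.sum_univ_four, hs''z 1 (by decide), hs''z 2 (by decide), hs''z 3 (by decide)]
    simp [hB_def, hc_def, hd_def]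
  set z := u' 3 with hz_def
  set w := u'' 3 with hw_def
  set X := ‖z‖ with hX_def
  set Y := ‖w‖ with hY_def
  have usum' : ∑ i, ‖u' i‖
      = ‖u' 0‖ + ‖u' 1‖ + ‖u' 2‖ + X :=
    Fin.sum_univ_four _
  have usum'' : ∑ i, ‖u'' i‖
      = ‖u'' 0‖ + ‖u'' 1‖ + ‖u'' 2‖ + Y :=
    Fin.sum_univ_four _
  have habs1 : ‖z + w‖ = 1 := by
    rw [← hUi 3, hu4, Complex.norm_exp]
    simp [Complex.mul_re]
  -- Cauchy-Schwarz: A + B ≤ 1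
  have hABsq : (A * B) ^ 2 = (a * d) * (b * c) := by rw [mul_pow, hA2, hB2]; ring
  have hAMGM : 2 * (A * B) ≤ a * d + b * c := by
    have h1 : A * B = Real.sqrt (a * b * (c * d)) := (Real.sqrt_mul (by positivity) _).symm
    have h2 : a * b * (c * d) = (a * d) * (b * c) := by ring
    have h3 : Real.sqrt ((a * d) * (b * c)) ≤ (a * d + b * c) / 2 := by
      rw [show (a * d + b * c) / 2 = Real.sqrt (((a * d + b * c) / 2) ^ 2) from
        (Real.sqrt_sq (by positivity)).symm]
      exact Real.sqrt_le_sqrt (by nlinarith [sq_nonneg (a * d - b * c)])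
    rw [h2] at h1
    linarith
  have hprod1 : (a + c) * (b + d) = 1 := by
    rw [hac, hbd]; field_simp
  have hprodexp : a * b + a * d + b * c + c * d = 1 := by linear_combination hprod1
  have hCle : A + B ≤ 1 := by
    have hexp : (A + B) ^ 2 = A ^ 2 + 2 * (A * B) + B ^ 2 := by ring
    have hsq : (A + B) ^ 2 ≤ 1 := by linarith [hexp, hA2, hB2, hAMGM, hprodexp]
    have hexp2 : (A + B - 1) ^ 2 = (A + B) ^ 2 - 2 * (A + B) + 1 := by ring
    linarith [sq_nonneg (A + B - 1), hexp2, hsq]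
  -- chain of inequalities, all are equalities
  have htri : 1 ≤ X + Y := by
    have := norm_add_le z w
    rw [habs1] at this; exact this
  have hW3'A : ‖u' 0‖ + ‖u' 1‖ + ‖u' 2‖ + X ≤ A := by
    rw [← usum', ← sum']; exact hW3'
  have hW3''B : ‖u'' 0‖ + ‖u'' 1‖ + ‖u'' 2‖ + Y ≤ B := by
    rw [← usum'', ← sum'']; exact hW3''
  have hp0 := norm_nonneg (u' 0)
  have hp1 := norm_nonneg (u' 1)
  have hp2 := norm_nonneg (u' 2)
  have hq0 := norm_nonneg (u'' 0)
  have hq1 := norm_nonneg (u'' 1)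
  have hq2 := norm_nonneg (u'' 2)
  have hXA : X = A := by linarith
  have hYB : Y = B := by linarith
  have hAB1 : A + B = 1 := by linarith
  have hp0e : u' 0 = 0 := norm_eq_zero.mp (le_antisymm (by linarith) hp0)
  have hp1e : u' 1 = 0 := norm_eq_zero.mp (le_antisymm (by linarith) hp1)
  have hp2e : u' 2 = 0 := norm_eq_zero.mp (le_antisymm (by linarith) hp2)
  have hq0e : u'' 0 = 0 := norm_eq_zero.mp (le_antisymm (by linarith) hq0)
  have hq1e : u'' 1 = 0 := norm_eq_zero.mp (le_antisymm (by linarith) hq1)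
  have hq2e : u'' 2 = 0 := norm_eq_zero.mp (le_antisymm (by linarith) hq2)
  have hu'z : ∀ i, i ≠ 3 → u' i = 0 := by
    intro i hi
    fin_cases i
    exacts [hp0e, hp1e, hp2e, absurd rfl hi]
  have hu''z : ∀ i, i ≠ 3 → u'' i = 0 := by
    intro i hi
    fin_cases i
    exacts [hq0e, hq1e, hq2e, absurd rfl hi]
  -- equality in Cauchy-Schwarz: a*d = b*c
  have hsq1 : (A + B) ^ 2 = 1 := by rw [hAB1]; norm_num
  have h2AB : 2 * (A * B) = a * d + b * c := by linear_combination hsq1 - hA2 - hB2 - hprod1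
  have h4 : (a * d + b * c) ^ 2 = 4 * ((A * B) ^ 2) := by rw [← h2AB]; ring
  have h5 : (a * d - b * c) ^ 2 = 0 := by linear_combination h4 + 4 * hABsq
  have hadbc : a * d = b * c := by
    have := pow_eq_zero_iff (n := 2) (by norm_num) |>.mp h5
    linarith
  rcases eq_or_lt_of_le hA0 with hA | hApos
  ·
    have hab : a * b = 0 := by rw [← hA2, ← hA]; ring
    have hB1 : B = 1 := by linarith
    have hcd : c * d = 1 := by rw [← hB2, hB1]; norm_num
    have hcd_pos : (0:ℝ) < c * d := by rw [hcd]; norm_num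
    have hcpos : 0 < c := pos_left_of_mul_pos' hc0 hcd_pos
    have hdpos : 0 < d := pos_right_of_mul_pos' hd0 hcd_pos
    have hasq : a ^ 2 * d = 0 := by linear_combination a * hadbc + c * hab
    have ha : a = 0 := by
      have : a ^ 2 = 0 := by
        rcases mul_eq_zero.mp hasq with h | h
        · exact h
        · exact absurd h (ne_of_gt hdpos)
      exact pow_eq_zero_iff (by norm_num) |>.mp this
    have hb : b = 0 := by
      have : b * c = 0 := by rw [← hadbc, ha]; ring
      rcases mul_eq_zero.mp this with h | h
      · exact h
      · exact absurd h (ne_of_gt hcpos)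
    have hz0 : z = 0 := by
      apply norm_eq_zero.mp
      rw [← hX_def, hXA, ← hA]
    refine ⟨0, le_refl 0, Or.inl ⟨?_, ?_, ?_⟩⟩
    · funext i
      fin_cases i
      · simpa using ha
      · simpa using hs'z 1 (by decide)
      · simpa using hs'z 2 (by decide)
      · simpa using hs'z 3 (by decide)
    · funext i
      fin_cases i
      · simpa using hb
      · simpa using ht'z 1 (by decide)
      · simpa using ht'z 2 (by decide)
      · simpa using ht'z 3 (by decide)
    · funext i
      fin_cases i
      · simp [hu'z 0 (by decide)]
      · simp [hu'z 1 (by decide)]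
      · simp [hu'z 2 (by decide)]
      · simp [← hz_def, hz0]
  rcases eq_or_lt_of_le hB0 with hB | hBpos
  · -- B = 0
    have hcd : c * d = 0 := by rw [← hB2, ← hB]; ring
    have hA1 : A = 1 := by linarith
    have hab : a * b = 1 := by rw [← hA2, hA1]; norm_num
    have hab_pos : (0:ℝ) < a * b := by rw [hab]; norm_num
    have hapos : 0 < a := pos_left_of_mul_pos' ha0 hab_pos
    have hbpos : 0 < b := pos_right_of_mul_pos' hb0 hab_pos
    have hcsq : c ^ 2 * b = 0 := by linear_combination c * hadbc.symm + a * hcd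
    have hc : c = 0 := by
      have : c ^ 2 = 0 := by
        rcases mul_eq_zero.mp hcsq with h | h
        · exact h
        · exact absurd h (ne_of_gt hbpos)
      exact pow_eq_zero_iff (by norm_num) |>.mp this
    have hd : d = 0 := by
      have : a * d = 0 := by rw [hadbc, hc]; ring
      rcases mul_eq_zero.mp this with h | h
      · exact absurd h (ne_of_gt hapos)
      · exact h
    have hw0 : w = 0 := by
      apply norm_eq_zero.mp
      rw [← hY_def, hYB, ← hB]
    refine ⟨0, le_refl 0, Or.inr ⟨?_, ?_, ?_⟩⟩
    · funext i
      fin_cases i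
      · simpa using hc
      · simpa using hs''z 1 (by decide)
      · simpa using hs''z 2 (by decide)
      · simpa using hs''z 3 (by decide)
    · funext i
      fin_cases i
      · simpa using hd
      · simpa using ht''z 1 (by decide)
      · simpa using ht''z 2 (by decide)
      · simpa using ht''z 3 (by decide)
    · funext i
      fin_cases i
      · simp [hu''z 0 (by decide)]
      · simp [hu''z 1 (by decide)]
      · simp [hu''z 2 (by decide)]
      · simp [← hw_def, hw0]
  -- main case : both positive
  have hab_pos : 0 < a * b := hA2 ▸ pow_pos hApos 2
  have hcd_pos : 0 < c * d := hB2 ▸ pow_pos hBpos 2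
  have hapos : 0 < a := pos_left_of_mul_pos' ha0 hab_pos
  have hbpos : 0 < b := pos_right_of_mul_pos' hb0 hab_pos
  have hcpos : 0 < c := pos_left_of_mul_pos' hc0 hcd_pos
  have hdpos : 0 < d := pos_right_of_mul_pos' hd0 hcd_pos
  set k := a / c with hk_def
  have hk0 : 0 ≤ k := by positivity
  have hka : a = k * c := by rw [hk_def, div_mul_cancel₀ a hcpos.ne']
  have hkb : b = k * d := by
    rw [hk_def]; field_simp; linarith [hadbc]
  have hAkB : A = k * B := by
    rw [hA_def, hB_def, hka, hkb]
    rw [show k * c * (k * d) = k ^ 2 * (c * d) by ring]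
    rw [Real.sqrt_mul (sq_nonneg k), Real.sqrt_sq hk0]
  have hXkY : X = k * Y := by rw [hXA, hYB, hAkB]
  have hYpos : 0 < Y := by rw [hYB]; exact hBpos
  -- triangle equality forces z = k * w
  have htri_eq : ‖z + w‖ = X + Y := by
    rw [habs1]; linarith
  have hre : (z * (starRingEnd ℂ) w).re = k * Y ^ 2 := by
    have h1 : Complex.normSq (z + w) = (X + Y) ^ 2 := by
      rw [← Complex.sq_norm, htri_eq]
    rw [Complex.normSq_add, ← Complex.sq_norm z, ← Complex.sq_norm w, ← hX_def, ← hY_def] at h1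
    linear_combination (1/2 : ℝ) * h1 + Y * hXkY
  have hzkw : z = (k : ℂ) * w := by
    have hnormSq : Complex.normSq (z - (k : ℂ) * w) = 0 := by
      rw [Complex.normSq_sub, Complex.normSq_mul, Complex.normSq_ofReal]
      have hconj : (z * (starRingEnd ℂ) ((k : ℂ) * w)).re = k * (z * (starRingEnd ℂ) w).re := by
        rw [map_mul, Complex.conj_ofReal,
          show z * ((k : ℂ) * (starRingEnd ℂ) w) = (k : ℂ) * (z * (starRingEnd ℂ) w) by ring,
          Complex.re_ofReal_mul]
      rw [hconj, hre, ← Complex.sq_norm z, ← Complex.sq_norm w, ← hX_def, ← hY_def, hXkY]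
      ring
    have := Complex.normSq_eq_zero.mp hnormSq
    linear_combination this
  refine ⟨k, hk0, Or.inl ⟨?_, ?_, ?_⟩⟩
  · funext i
    fin_cases i
    · simpa using hka
    · simp [hs'z 1 (by decide), hs''z 1 (by decide)]
    · simp [hs'z 2 (by decide), hs''z 2 (by decide)]
    · simp [hs'z 3 (by decide), hs''z 3 (by decide)]
  · funext i
    fin_cases i
    · simpa using hkb
    · simp [ht'z 1 (by decide), ht''z 1 (by decide)]
    · simp [ht'z 2 (by decide), ht''z 2 (by decide)]
    · simp [ht'z 3 (by decide), ht''z 3 (by decide)]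
  · funext i
    fin_cases i
    · simp [hu'z 0 (by decide), hu''z 0 (by decide)]
    · simp [hu'z 1 (by decide), hu''z 1 (by decide)]
    · simp [hu'z 2 (by decide), hu''z 2 (by decide)]
    · simpa [Complex.real_smul] using hzkw
end

section
/- Let s, t ∈ ℝ⁴ be nonnegative and u ∈ ℂ⁴ with √(s₁t₁) = √(s₄t₄) = |u₂| = |u₃| = 1 and s₂ = s₃ = t₂ = t₃ = 0, u₁ = u₄ = 0. Suppose (s,t,u) = (s',t',u') + (s'',t'',u'') with nonnegative s-, t-components where both summands satisfy √(s'ᵢt'ᵢ) + √(s'ⱼt'ⱼ) ≥ |u'ᵢ| + |u'ⱼ| for (i,j) ∈ {(1,3),(2,4),(1,2),(3,4)} (and likewise for the double-primed triple). Then one summand is a nonnegative multiple of the other. -/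
/-- The inequality `W₁[i,j]` for a witness triple `(s,t,u)`. -/
def W1 (s t : Fin 4 → ℝ) (u : Fin 4 → ℂ) (i j : Fin 4) : Prop :=
  Real.sqrt (s i * t i) + Real.sqrt (s j * t j) ≥ ‖u i‖ + ‖u j‖

private lemma eq_of_sq_eq' {x y : ℝ} (hx : 0 ≤ x) (hy : 0 ≤ y) (h : x ^ 2 = y ^ 2) : x = y := by
  rw [← Real.sqrt_sq hx, ← Real.sqrt_sq hy, h]

private lemma sqrt_cs (a b c d : ℝ) (ha : 0 ≤ a) (hb : 0 ≤ b) (hc : 0 ≤ c) (hd : 0 ≤ d) :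
    Real.sqrt (a * c) + Real.sqrt (b * d) ≤ Real.sqrt ((a + b) * (c + d)) := by
  rw [Real.le_sqrt (by positivity) (by positivity)]
  have h1 := Real.sq_sqrt (mul_nonneg ha hc)
  have h2 := Real.sq_sqrt (mul_nonneg hb hd)
  have h3 : Real.sqrt (a * c) * Real.sqrt (b * d) = Real.sqrt (a * d) * Real.sqrt (b * c) := by
    rw [← Real.sqrt_mul (mul_nonneg ha hc), ← Real.sqrt_mul (mul_nonneg ha hd)]
    ring_nf
  have h4 := Real.sq_sqrt (mul_nonneg ha hd)
  have h5 := Real.sq_sqrt (mul_nonneg hb hc)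
  nlinarith [sq_nonneg (Real.sqrt (a * d) - Real.sqrt (b * c))]

/-- Main chain lemma: all inequalities in the chain collapse to equalities. -/
private lemma chainA (a b c d e f : ℝ) (x y : ℂ)
    (ha : 0 ≤ a) (hb : 0 ≤ b) (hc : 0 ≤ c) (hd : 0 ≤ d) (he : 0 ≤ e) (hf : 0 ≤ f)
    (h1 : Real.sqrt ((a + b) * (c + d)) = 1) (hxy : ‖x + y‖ = 1)
    (hA : Real.sqrt (a * c) ≥ e + ‖x‖)
    (hB : Real.sqrt (b * d) ≥ f + ‖y‖) :
    e = 0 ∧ f = 0 ∧ ‖x‖ = Real.sqrt (a * c) ∧ ‖y‖ = Real.sqrt (b * d) ∧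
      Real.sqrt (a * c) + Real.sqrt (b * d) = 1 ∧ a * d = b * c ∧ SameRay ℝ x y := by
  have hcs := sqrt_cs a b c d ha hb hc hd
  rw [h1] at hcs
  have htri : ‖x + y‖ ≤ ‖x‖ + ‖y‖ := norm_add_le x y
  rw [hxy] at htri
  have he0 : e = 0 := by linarith
  have hf0 : f = 0 := by linarith
  have hax : ‖x‖ = Real.sqrt (a * c) := by linarith
  have hay : ‖y‖ = Real.sqrt (b * d) := by linarith
  have hsum : Real.sqrt (a * c) + Real.sqrt (b * d) = 1 := by linarith
  refine ⟨he0, hf0, hax, hay, hsum, ?_, ?_⟩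
  · -- a * d = b * c
    have hac := Real.sq_sqrt (mul_nonneg ha hc)
    have hbd := Real.sq_sqrt (mul_nonneg hb hd)
    have habcd : ((a + b) * (c + d)) = 1 := by
      have := Real.sq_sqrt (by positivity : (0:ℝ) ≤ (a + b) * (c + d))
      rw [h1] at this; linarith [this]
    have h2AB : a * d + b * c = 2 * (Real.sqrt (a * c) * Real.sqrt (b * d)) := by
      linear_combination habcd + hac + hbd -
        (Real.sqrt (a * c) + Real.sqrt (b * d) + 1) * hsum
    have hprod : (a * d) * (b * c) = (Real.sqrt (a * c) * Real.sqrt (b * d)) ^ 2 := by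
      rw [mul_pow, hac, hbd]; ring
    have hz : (a * d - b * c) ^ 2 = 0 := by
      linear_combination (a * d + b * c + 2 * (Real.sqrt (a * c) * Real.sqrt (b * d))) * h2AB -
        4 * hprod
    have := sq_eq_zero_iff.mp hz
    linarith [this]
  · -- SameRay
    rw [sameRay_iff_norm_add,
      hxy, hax, hay, hsum]

/-- Component proportionality from the Cauchy–Schwarz equality case. -/
private lemma compB (a b c d : ℝ) (ha : 0 ≤ a) (hb : 0 ≤ b) (hc : 0 ≤ c) (hd : 0 ≤ d)
    (h : a * d = b * c) : Real.sqrt (b * d) * a = Real.sqrt (a * c) * b := by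
  apply eq_of_sq_eq' (mul_nonneg (Real.sqrt_nonneg _) ha) (mul_nonneg (Real.sqrt_nonneg _) hb)
  rw [mul_pow, mul_pow, Real.sq_sqrt (mul_nonneg hb hd), Real.sq_sqrt (mul_nonneg ha hc)]
  linear_combination a * b * h

theorem extreme_W2e14_in_BCdual (s t s' t' s'' t'' : Fin 4 → ℝ) (u u' u'' : Fin 4 → ℂ)
    (hs : ∀ i, 0 ≤ s i) (ht : ∀ i, 0 ≤ t i)
    (h1 : Real.sqrt (s 0 * t 0) = 1) (h4 : Real.sqrt (s 3 * t 3) = 1)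
    (hu2 : ‖u 1‖ = 1) (hu3 : ‖u 2‖ = 1)
    (hs2 : s 1 = 0) (hs3 : s 2 = 0) (ht2 : t 1 = 0) (ht3 : t 2 = 0)
    (hu1 : u 0 = 0) (hu4 : u 3 = 0)
    (hs' : ∀ i, 0 ≤ s' i) (ht' : ∀ i, 0 ≤ t' i)
    (hs'' : ∀ i, 0 ≤ s'' i) (ht'' : ∀ i, 0 ≤ t'' i)
    (hsum : s = s' + s'' ∧ t = t' + t'' ∧ u = u' + u'')
    (hW' : W1 s' t' u' 0 2 ∧ W1 s' t' u' 1 3 ∧ W1 s' t' u' 0 1 ∧ W1 s' t' u' 2 3)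
    (hW'' : W1 s'' t'' u'' 0 2 ∧ W1 s'' t'' u'' 1 3 ∧ W1 s'' t'' u'' 0 1 ∧ W1 s'' t'' u'' 2 3) :
    ∃ c : ℝ, 0 ≤ c ∧
      ((s' = c • s'' ∧ t' = c • t'' ∧ u' = (c : ℝ) • u'') ∨
       (s'' = c • s' ∧ t'' = c • t' ∧ u'' = (c : ℝ) • u')) := by
  obtain ⟨hS, hT, hU⟩ := hsum
  have es : ∀ i, s i = s' i + s'' i := fun i => by rw [hS]; rfl
  have et : ∀ i, t i = t' i + t'' i := fun i => by rw [hT]; rfl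
  have eu : ∀ i, u i = u' i + u'' i := fun i => by rw [hU]; rfl
  -- zero components
  have zs'1 : s' 1 = 0 := by have := es 1; have := hs' 1; have := hs'' 1; linarith
  have zs''1 : s'' 1 = 0 := by have := es 1; have := hs' 1; have := hs'' 1; linarith
  have zs'2 : s' 2 = 0 := by have := es 2; have := hs' 2; have := hs'' 2; linarith
  have zs''2 : s'' 2 = 0 := by have := es 2; have := hs' 2; have := hs'' 2; linarith
  have zt'1 : t' 1 = 0 := by have := et 1; have := ht' 1; have := ht'' 1; linarith
  have zt''1 : t'' 1 = 0 := by have := et 1; have := ht' 1; have := ht'' 1; linarith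
  have zt'2 : t' 2 = 0 := by have := et 2; have := ht' 2; have := ht'' 2; linarith
  have zt''2 : t'' 2 = 0 := by have := et 2; have := ht' 2; have := ht'' 2; linarith
  obtain ⟨w02', w13', w01', w23'⟩ := hW'
  obtain ⟨w02'', w13'', w01'', w23''⟩ := hW''
  unfold W1 at w02' w13' w01' w23' w02'' w13'' w01'' w23''
  rw [zs'2, zt'2, zero_mul, Real.sqrt_zero, add_zero] at w02'
  rw [zs'1, zt'1, zero_mul, Real.sqrt_zero, zero_add] at w13'
  rw [zs'1, zt'1, zero_mul, Real.sqrt_zero, add_zero] at w01'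
  rw [zs'2, zt'2, zero_mul, Real.sqrt_zero, zero_add] at w23'
  rw [zs''2, zt''2, zero_mul, Real.sqrt_zero, add_zero] at w02''
  rw [zs''1, zt''1, zero_mul, Real.sqrt_zero, zero_add] at w13''
  rw [zs''1, zt''1, zero_mul, Real.sqrt_zero, add_zero] at w01''
  rw [zs''2, zt''2, zero_mul, Real.sqrt_zero, zero_add] at w23''
  -- chain at index 0 (with x = u' 2, y = u'' 2)
  have c0 := chainA (s' 0) (s'' 0) (t' 0) (t'' 0) (‖u' 0‖) (‖u'' 0‖)
      (u' 2) (u'' 2) (hs' 0) (hs'' 0) (ht' 0) (ht'' 0)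
      (norm_nonneg _) (norm_nonneg _)
      (by rw [← es 0, ← et 0]; exact h1) (by rw [← eu 2]; exact hu3)
      w02' w02''
  obtain ⟨hu'0, hu''0, hx2, hy2, hsumA, hcross0, hray2⟩ := c0
  -- chain at index 3 (with x = u' 1, y = u'' 1)
  have c3 := chainA (s' 3) (s'' 3) (t' 3) (t'' 3) (‖u' 3‖) (‖u'' 3‖)
      (u' 1) (u'' 1) (hs' 3) (hs'' 3) (ht' 3) (ht'' 3)
      (norm_nonneg _) (norm_nonneg _)
      (by rw [← es 3, ← et 3]; exact h4) (by rw [← eu 1]; exact hu2)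
      (by linarith [w13']) (by linarith [w13''])
  obtain ⟨hu'3, hu''3, hx1, hy1, hsumB, hcross3, hray1⟩ := c3
  set A' := Real.sqrt (s' 0 * t' 0) with hA'def
  set A'' := Real.sqrt (s'' 0 * t'' 0) with hA''def
  set B' := Real.sqrt (s' 3 * t' 3) with hB'def
  set B'' := Real.sqrt (s'' 3 * t'' 3) with hB''def
  -- A' = B', A'' = B''
  have hAB' : A' = B' := by
    have h1' : A' ≥ B' := by rw [← hx1]; linarith [w01', norm_nonneg (u' 0)]
    have h2' : B' ≥ A' := by rw [← hx2]; linarith [w23', norm_nonneg (u' 3)]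
    linarith
  have hAB'' : A'' = B'' := by
    have h1'' : A'' ≥ B'' := by rw [← hy1]; linarith [w01'', norm_nonneg (u'' 0)]
    have h2'' : B'' ≥ A'' := by rw [← hy2]; linarith [w23'', norm_nonneg (u'' 3)]
    linarith
  have hu'0z : u' 0 = 0 := by rwa [norm_eq_zero] at hu'0
  have hu''0z : u'' 0 = 0 := by rwa [norm_eq_zero] at hu''0
  have hu'3z : u' 3 = 0 := by rwa [norm_eq_zero] at hu'3
  have hu''3z : u'' 3 = 0 := by rwa [norm_eq_zero] at hu''3
  by_cases hA0 : A'' = 0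
  · -- degenerate case: the double-primed triple is zero
    have hB0 : B'' = 0 := by rw [← hAB'']; exact hA0
    have hA'1 : A' = 1 := by rw [hA0] at hsumA; linarith
    have hst'0 : s' 0 * t' 0 = 1 := by
      have := Real.sq_sqrt (mul_nonneg (hs' 0) (ht' 0))
      rw [← hA'def, hA'1] at this; linarith
    have hst''0 : s'' 0 * t'' 0 = 0 := by
      have := Real.sq_sqrt (mul_nonneg (hs'' 0) (ht'' 0))
      rw [← hA''def, hA0] at this; linarith
    have hs''00 : s'' 0 = 0 := by
      have hq : s'' 0 ^ 2 = 0 := by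
        linear_combination (-(s'' 0 ^ 2)) * hst'0 + (s' 0 ^ 2) * hst''0 +
          (-(s' 0 * s'' 0)) * hcross0
      exact sq_eq_zero_iff.mp hq
    have ht''00 : t'' 0 = 0 := by
      have hq : t'' 0 ^ 2 = 0 := by
        linear_combination (-(t'' 0 ^ 2)) * hst'0 + (t' 0 ^ 2) * hst''0 +
          (t' 0 * t'' 0) * hcross0
      exact sq_eq_zero_iff.mp hq
    have hB'1 : B' = 1 := by rw [← hAB']; exact hA'1
    have hst'3 : s' 3 * t' 3 = 1 := by
      have := Real.sq_sqrt (mul_nonneg (hs' 3) (ht' 3))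
      rw [← hB'def, hB'1] at this; linarith
    have hst''3 : s'' 3 * t'' 3 = 0 := by
      have := Real.sq_sqrt (mul_nonneg (hs'' 3) (ht'' 3))
      rw [← hB''def, hB0] at this; linarith
    have hs''33 : s'' 3 = 0 := by
      have hq : s'' 3 ^ 2 = 0 := by
        linear_combination (-(s'' 3 ^ 2)) * hst'3 + (s' 3 ^ 2) * hst''3 +
          (-(s' 3 * s'' 3)) * hcross3
      exact sq_eq_zero_iff.mp hq
    have ht''33 : t'' 3 = 0 := by
      have hq : t'' 3 ^ 2 = 0 := by
        linear_combination (-(t'' 3 ^ 2)) * hst'3 + (t' 3 ^ 2) * hst''3 +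
          (t' 3 * t'' 3) * hcross3
      exact sq_eq_zero_iff.mp hq
    have hu''1z : u'' 1 = 0 := norm_eq_zero.mp (by rw [hy1, ← hAB'']; exact hA0)
    have hu''2z : u'' 2 = 0 := norm_eq_zero.mp (by rw [hy2]; exact hA0)
    refine ⟨0, le_refl 0, Or.inr ⟨?_, ?_, ?_⟩⟩
    · funext i; fin_cases i <;>
        simp [hs''00, zs''1, zs''2, hs''33]
    · funext i; fin_cases i <;>
        simp [ht''00, zt''1, zt''2, ht''33]
    · funext i; fin_cases i <;>
        simp [hu''0z, hu''1z, hu''2z, hu''3z]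
  · -- nondegenerate case: c = A'/A''
    have hA''pos : 0 < A'' := lt_of_le_of_ne (Real.sqrt_nonneg _) (Ne.symm hA0)
    refine ⟨A' / A'', div_nonneg (Real.sqrt_nonneg _) hA''pos.le, Or.inl ⟨?_, ?_, ?_⟩⟩
    · funext i; fin_cases i
      · have := compB (s' 0) (s'' 0) (t' 0) (t'' 0) (hs' 0) (hs'' 0) (ht' 0) (ht'' 0) hcross0
        show s' 0 = A' / A'' * s'' 0
        rw [← hA'def, ← hA''def] at this
        field_simp
        linarith
      · show s' 1 = A' / A'' * s'' 1; rw [zs'1, zs''1, mul_zero]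
      · show s' 2 = A' / A'' * s'' 2; rw [zs'2, zs''2, mul_zero]
      · have := compB (s' 3) (s'' 3) (t' 3) (t'' 3) (hs' 3) (hs'' 3) (ht' 3) (ht'' 3) hcross3
        show s' 3 = A' / A'' * s'' 3
        rw [← hB'def, ← hB''def, ← hAB', ← hAB''] at this
        field_simp
        linarith
    · funext i; fin_cases i
      · have := compB (t' 0) (t'' 0) (s' 0) (s'' 0) (ht' 0) (ht'' 0) (hs' 0) (hs'' 0)
          (by linarith [hcross0])
        show t' 0 = A' / A'' * t'' 0
        rw [mul_comm (t' 0) (s' 0), mul_comm (t'' 0) (s'' 0), ← hA'def, ← hA''def] at this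
        field_simp
        linarith
      · show t' 1 = A' / A'' * t'' 1; rw [zt'1, zt''1, mul_zero]
      · show t' 2 = A' / A'' * t'' 2; rw [zt'2, zt''2, mul_zero]
      · have := compB (t' 3) (t'' 3) (s' 3) (s'' 3) (ht' 3) (ht'' 3) (hs' 3) (hs'' 3)
          (by linarith [hcross3])
        show t' 3 = A' / A'' * t'' 3
        rw [mul_comm (t' 3) (s' 3), mul_comm (t'' 3) (s'' 3), ← hB'def, ← hB''def,
          ← hAB', ← hAB''] at this
        field_simp
        linarith
    · funext i; fin_cases i
      · show u' 0 = (A' / A'') • u'' 0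
        rw [hu'0z, hu''0z, smul_zero]
      · -- u' 1 = c • u'' 1
        have hy1ne : u'' 1 ≠ 0 := by
          intro h
          rw [h, norm_zero] at hy1
          exact hA0 (hAB''.trans hy1.symm)
        obtain ⟨r, hr0, hr⟩ := hray1.exists_nonneg_right hy1ne
        have habs : ‖u' 1‖ = r * ‖u'' 1‖ := by
          rw [hr, norm_smul, Real.norm_eq_abs, abs_of_nonneg hr0]
        rw [hx1, hy1, ← hAB', ← hAB''] at habs
        have hreq : r = A' / A'' := by field_simp; linarith
        show u' 1 = (A' / A'') • u'' 1
        rw [← hreq]; exact hr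
      · -- u' 2 = c • u'' 2
        have hy2ne : u'' 2 ≠ 0 := by
          intro h
          rw [h, norm_zero] at hy2
          exact hA0 hy2.symm
        obtain ⟨r, hr0, hr⟩ := hray2.exists_nonneg_right hy2ne
        have habs : ‖u' 2‖ = r * ‖u'' 2‖ := by
          rw [hr, norm_smul, Real.norm_eq_abs, abs_of_nonneg hr0]
        rw [hx2, hy2] at habs
        have hreq : r = A' / A'' := by field_simp; linarith
        show u' 2 = (A' / A'') • u'' 2
        rw [← hreq]; exact hr
      · show u' 3 = (A' / A'') • u'' 3
        rw [hu'3z, hu''3z, smul_zero]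
end
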